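/- arXiv:1209.1123 — 5 statements merged into one kernel-verified Lean document; each statement's English description precedes it below -/
import Mathlib

section
/- (Youla's parametrization, Theorem 1.) Let (M, N, M̃, Ñ, X, Y, X̃, Ỹ) be a DCF of the strictly proper plant G ∈ F^{m×p} over Ω. Then: (i) for every stable Q ∈ 𝔸^{p×m}, the matrices Y_Q = Y − QÑ and Ỹ_Q = Ỹ − NQ are invertible over F, Y_Q⁻¹·X_Q = X̃_Q·Ỹ_Q⁻¹, and the controller K_Q = Y_Q⁻¹·X_Q stabilizes G; (ii) conversely, every controller K ∈ F^{p×m} that stabilizes G can be written as K = K_Q for some stable Q ∈ 𝔸^{p×m}. -/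
open Matrix

noncomputable section

/-- The field of real rational functions. -/
abbrev F : Type := RatFunc ℝ

/-- A rational function is stable (w.r.t. stability region `Ω`) if it is proper and
every complex root of the complexification of its reduced denominator lies in `Ω`. -/
def StableF (Ω : Set ℂ) (f : F) : Prop :=
  f.intDegree ≤ 0 ∧ ∀ z : ℂ, (f.denom.map (algebraMap ℝ ℂ)).IsRoot z → z ∈ Ω

/-- A matrix over `F` is stable if all its entries are stable. -/
def MatStable (Ω : Set ℂ) {a b : Type} (M : Matrix a b F) : Prop :=
  ∀ i j, StableF Ω (M i j)

/-- A matrix over `F` is strictly proper if every entry is `0` or has negative `intDegree`. -/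
def StrictlyProper {a b : Type} (G : Matrix a b F) : Prop :=
  ∀ i j, G i j = 0 ∨ (G i j).intDegree < 0

/-- A matrix over `F` is proper if every entry has nonpositive `intDegree`. -/
def ProperM {a b : Type} (K : Matrix a b F) : Prop :=
  ∀ i j, (K i j).intDegree ≤ 0

/-- `K` stabilizes `G` if `I + G*K` is invertible and the four closed-loop
transfer matrices are stable. -/
def Stabilizes (Ω : Set ℂ) {m p : ℕ} (G : Matrix (Fin m) (Fin p) F)
    (K : Matrix (Fin p) (Fin m) F) : Prop :=
  IsUnit (1 + G * K).det ∧
    MatStable Ω (1 + G * K)⁻¹ ∧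
    MatStable Ω ((1 + G * K)⁻¹ * G) ∧
    MatStable Ω (K * (1 + G * K)⁻¹) ∧
    MatStable Ω (1 + K * G)⁻¹

/-- A doubly coprime factorization of `G` over `Ω`. -/
structure IsDCF (Ω : Set ℂ) {m p : ℕ} (G : Matrix (Fin m) (Fin p) F)
    (M : Matrix (Fin p) (Fin p) F) (N : Matrix (Fin m) (Fin p) F)
    (Mt : Matrix (Fin m) (Fin m) F) (Nt : Matrix (Fin m) (Fin p) F)
    (X : Matrix (Fin p) (Fin m) F) (Y : Matrix (Fin p) (Fin p) F)
    (Xt : Matrix (Fin p) (Fin m) F) (Yt : Matrix (Fin m) (Fin m) F) : Prop where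
  stM : MatStable Ω M
  stN : MatStable Ω N
  stMt : MatStable Ω Mt
  stNt : MatStable Ω Nt
  stX : MatStable Ω X
  stY : MatStable Ω Y
  stXt : MatStable Ω Xt
  stYt : MatStable Ω Yt
  hM : IsUnit M.det
  hMt : IsUnit Mt.det
  hLeft : G = Mt⁻¹ * Nt
  hRight : G = N * M⁻¹
  bezout : Matrix.fromBlocks Y X (-Nt) Mt * Matrix.fromBlocks M (-Xt) N Yt = 1

/-- A left coprime factorization of `G` over `Ω`. -/
def IsLCF (Ω : Set ℂ) {m p : ℕ} (G : Matrix (Fin m) (Fin p) F)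
    (Mt : Matrix (Fin m) (Fin m) F) (Nt : Matrix (Fin m) (Fin p) F) : Prop :=
  MatStable Ω Mt ∧ MatStable Ω Nt ∧ IsUnit Mt.det ∧ G = Mt⁻¹ * Nt ∧
    ∃ Xt : Matrix (Fin p) (Fin m) F, ∃ Yt : Matrix (Fin m) (Fin m) F,
      MatStable Ω Xt ∧ MatStable Ω Yt ∧ Nt * Xt + Mt * Yt = 1

/-- A right coprime factorization of `G` over `Ω`. -/
def IsRCF (Ω : Set ℂ) {m p : ℕ} (G : Matrix (Fin m) (Fin p) F)
    (N : Matrix (Fin m) (Fin p) F) (M : Matrix (Fin p) (Fin p) F) : Prop :=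
  MatStable Ω N ∧ MatStable Ω M ∧ IsUnit M.det ∧ G = N * M⁻¹ ∧
    ∃ X : Matrix (Fin p) (Fin m) F, ∃ Y : Matrix (Fin p) (Fin p) F,
      MatStable Ω X ∧ MatStable Ω Y ∧ Y * M + X * N = 1

/-- Evaluation of a rational function at a complex point (complexified num/denom). -/
def evalC (z : ℂ) (f : F) : ℂ :=
  (f.num.map (algebraMap ℝ ℂ)).eval z / (f.denom.map (algebraMap ℝ ℂ)).eval z

namespace Youla

/-! ### The subring of stable rational functions -/

lemma proper_add {f g : F} (hf : f.intDegree ≤ 0) (hg : g.intDegree ≤ 0) :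
    (f + g).intDegree ≤ 0 := by
  by_cases h0 : f + g = 0
  · simp [h0, RatFunc.intDegree_zero]
  by_cases hgz : g = 0
  · simpa [hgz] using hf
  exact le_trans (RatFunc.intDegree_add_le hgz h0) (max_le hf hg)

lemma proper_mul {f g : F} (hf : f.intDegree ≤ 0) (hg : g.intDegree ≤ 0) :
    (f * g).intDegree ≤ 0 := by
  by_cases hfz : f = 0
  · simp [hfz, RatFunc.intDegree_zero]
  by_cases hgz : g = 0
  · simp [hgz, RatFunc.intDegree_zero]
  rw [RatFunc.intDegree_mul hfz hgz]
  omega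

lemma isRoot_of_dvd {d e : Polynomial ℂ} (h : d ∣ e) {z : ℂ} (hz : d.IsRoot z) :
    e.IsRoot z := by
  obtain ⟨c, rfl⟩ := h
  simp [Polynomial.IsRoot, hz.eq_zero]

lemma stable_of_denom_dvd {Ω : Set ℂ} {f g h : F}
    (hd : h.denom ∣ f.denom * g.denom)
    (hf : ∀ z : ℂ, (f.denom.map (algebraMap ℝ ℂ)).IsRoot z → z ∈ Ω)
    (hg : ∀ z : ℂ, (g.denom.map (algebraMap ℝ ℂ)).IsRoot z → z ∈ Ω) :
    ∀ z : ℂ, (h.denom.map (algebraMap ℝ ℂ)).IsRoot z → z ∈ Ω := by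
  intro z hz
  have h2 : ((f.denom * g.denom).map (algebraMap ℝ ℂ)).IsRoot z :=
    isRoot_of_dvd (Polynomial.map_dvd _ hd) hz
  rw [Polynomial.map_mul] at h2
  rw [Polynomial.IsRoot, Polynomial.eval_mul] at h2
  rcases mul_eq_zero.mp h2 with h3 | h3
  · exact hf z h3
  · exact hg z h3

def stableSubring (Ω : Set ℂ) : Subring F where
  carrier := {f | StableF Ω f}
  zero_mem' := by
    constructor
    · simp [RatFunc.intDegree_zero]
    · intro z hz
      simp [RatFunc.denom_zero, Polynomial.IsRoot] at hz
  one_mem' := by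
    constructor
    · simp [RatFunc.intDegree_one]
    · intro z hz
      simp [RatFunc.denom_one, Polynomial.IsRoot] at hz
  add_mem' := by
    rintro f g ⟨hf1, hf2⟩ ⟨hg1, hg2⟩
    exact ⟨proper_add hf1 hg1, stable_of_denom_dvd (RatFunc.denom_add_dvd f g) hf2 hg2⟩
  mul_mem' := by
    rintro f g ⟨hf1, hf2⟩ ⟨hg1, hg2⟩
    exact ⟨proper_mul hf1 hg1, stable_of_denom_dvd (RatFunc.denom_mul_dvd f g) hf2 hg2⟩
  neg_mem' := by
    rintro f ⟨hf1, hf2⟩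
    constructor
    · simpa [RatFunc.intDegree_neg] using hf1
    · have hd1 : ((-1 : F)).denom = 1 := by
        rw [show (-1 : F) = algebraMap (Polynomial ℝ) F (-1) by simp, RatFunc.denom_algebraMap]
      have hdvd : (-f).denom ∣ f.denom * ((-1 : F)).denom := by
        have := RatFunc.denom_mul_dvd f (-1)
        rwa [show f * (-1 : F) = -f by ring] at this
      rw [hd1, mul_one] at hdvd
      intro z hz
      exact hf2 z (isRoot_of_dvd (Polynomial.map_dvd _ hdvd) hz)

lemma mem_stableSubring {Ω : Set ℂ} {f : F} : f ∈ stableSubring Ω ↔ StableF Ω f :=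
  Iff.rfl

lemma matStable_mul {Ω : Set ℂ} {a b c : Type} [Fintype b] {A : Matrix a b F}
    {B : Matrix b c F} (hA : MatStable Ω A) (hB : MatStable Ω B) :
    MatStable Ω (A * B) := by
  intro i j
  rw [Matrix.mul_apply, ← mem_stableSubring]
  exact Subring.sum_mem _ fun k _ =>
    Subring.mul_mem _ (mem_stableSubring.mpr (hA i k)) (mem_stableSubring.mpr (hB k j))

lemma matStable_add {Ω : Set ℂ} {a b : Type} {A B : Matrix a b F}
    (hA : MatStable Ω A) (hB : MatStable Ω B) : MatStable Ω (A + B) := fun i j => by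
  have := Subring.add_mem (stableSubring Ω) (mem_stableSubring.mpr (hA i j))
    (mem_stableSubring.mpr (hB i j))
  exact mem_stableSubring.mp (by simpa using this)

lemma matStable_neg {Ω : Set ℂ} {a b : Type} {A : Matrix a b F}
    (hA : MatStable Ω A) : MatStable Ω (-A) := fun i j => by
  have := Subring.neg_mem (stableSubring Ω) (mem_stableSubring.mpr (hA i j))
  exact mem_stableSubring.mp (by simpa using this)

lemma matStable_sub {Ω : Set ℂ} {a b : Type} {A B : Matrix a b F}
    (hA : MatStable Ω A) (hB : MatStable Ω B) : MatStable Ω (A - B) := by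
  simpa [sub_eq_add_neg] using matStable_add hA (matStable_neg hB)

lemma matStable_one {Ω : Set ℂ} {a : Type} [DecidableEq a] :
    MatStable Ω (1 : Matrix a a F) := fun i j => by
  rw [Matrix.one_apply]
  split
  · exact mem_stableSubring.mp (Subring.one_mem _)
  · exact mem_stableSubring.mp (Subring.zero_mem _)

/-! ### Proper and strictly proper rational functions -/

def properSubring : Subring F where
  carrier := {f | f.intDegree ≤ 0}
  zero_mem' := by simp [RatFunc.intDegree_zero]
  one_mem' := by simp [RatFunc.intDegree_one]
  add_mem' := fun hf hg => proper_add hf hg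
  mul_mem' := fun hf hg => proper_mul hf hg
  neg_mem' := fun {f} hf => by simpa [RatFunc.intDegree_neg] using hf

/-- Strictly proper scalar predicate. -/
def SPf (f : F) : Prop := f = 0 ∨ f.intDegree < 0

lemma sp_proper {f : F} (h : SPf f) : f.intDegree ≤ 0 := by
  rcases h with h | h
  · simp [h, RatFunc.intDegree_zero]
  · omega

lemma SPf_add {f g : F} (hf : SPf f) (hg : SPf g) : SPf (f + g) := by
  by_cases h0 : f + g = 0
  · exact Or.inl h0
  rcases hf with hf | hf
  · simpa [hf] using hg
  rcases hg with hg | hg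
  · rw [hg, add_zero]; exact Or.inr hf
  have hgz : g ≠ 0 := fun h => by simp [h, RatFunc.intDegree_zero] at hg
  exact Or.inr (lt_of_le_of_lt (RatFunc.intDegree_add_le hgz h0) (max_lt hf hg))

lemma SPf_mul_left {f g : F} (hf : f.intDegree ≤ 0) (hg : SPf g) : SPf (f * g) := by
  rcases hg with hg | hg
  · exact Or.inl (by simp [hg])
  by_cases hfz : f = 0
  · exact Or.inl (by simp [hfz])
  have hgz : g ≠ 0 := fun h => by simp [h, RatFunc.intDegree_zero] at hg
  exact Or.inr (by rw [RatFunc.intDegree_mul hfz hgz]; omega)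

lemma SPf_mul_right {f g : F} (hf : SPf f) (hg : g.intDegree ≤ 0) : SPf (f * g) := by
  rw [mul_comm]; exact SPf_mul_left hg hf

lemma sp_mul_left {a b c : Type} [Fintype b] {A : Matrix a b F} {B : Matrix b c F}
    (hA : ProperM A) (hB : StrictlyProper B) : StrictlyProper (A * B) := by
  intro i j
  rw [Matrix.mul_apply]
  exact Finset.sum_induction _ SPf (fun _ _ => SPf_add) (Or.inl rfl)
    (fun k _ => SPf_mul_left (hA i k) (hB k j))

lemma sp_mul_right {a b c : Type} [Fintype b] {A : Matrix a b F} {B : Matrix b c F}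
    (hA : StrictlyProper A) (hB : ProperM B) : StrictlyProper (A * B) := by
  intro i j
  rw [Matrix.mul_apply]
  exact Finset.sum_induction _ SPf (fun _ _ => SPf_add) (Or.inl rfl)
    (fun k _ => SPf_mul_right (hA i k) (hB k j))

lemma sp_neg {a b : Type} {A : Matrix a b F} (hA : StrictlyProper A) :
    StrictlyProper (-A) := by
  intro i j
  rcases hA i j with h | h
  · exact Or.inl (by simp [Matrix.neg_apply, h])
  · refine Or.inr ?_
    rw [Matrix.neg_apply, RatFunc.intDegree_neg]
    exact h

lemma matStable_proper {Ω : Set ℂ} {a b : Type} {A : Matrix a b F}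
    (hA : MatStable Ω A) : ProperM A := fun i j => (hA i j).1

/-- The ideal of strictly proper elements inside the subring of proper elements. -/
def spIdeal : Ideal properSubring where
  carrier := {f | SPf f.val}
  zero_mem' := Or.inl rfl
  add_mem' := fun hf hg => SPf_add hf hg
  smul_mem' := fun c x hx => by
    have : SPf (c.val * x.val) := SPf_mul_left c.2 hx
    exact this

/-- Key determinant lemma: `det (1 + S) ≠ 0` when `S` is strictly proper. -/
lemma det_one_add_sp {n : ℕ} {S : Matrix (Fin n) (Fin n) F} (hS : StrictlyProper S) :
    (1 + S).det ≠ 0 := by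
  set P := properSubring
  let S' : Matrix (Fin n) (Fin n) P := fun i j => ⟨S i j, sp_proper (hS i j)⟩
  let A : Matrix (Fin n) (Fin n) P := 1 + S'
  have hmap : A.map P.subtype = 1 + S := by
    ext i j
    simp only [A, Matrix.map_apply, Matrix.add_apply, Matrix.one_apply, S']
    split <;> erw [Matrix.add_apply] <;> simp [Matrix.one_apply, *]
  let π : P →+* P ⧸ spIdeal := Ideal.Quotient.mk spIdeal
  have hπ : A.map π = 1 := by
    ext i j
    simp only [A, Matrix.map_apply, Matrix.add_apply]
    rw [π.map_add]
    have : π (S' i j) = 0 := Ideal.Quotient.eq_zero_iff_mem.mpr (hS i j)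
    rw [this, add_zero]
    rw [Matrix.one_apply, Matrix.one_apply]
    split
    · rw [π.map_one]
    · rw [π.map_zero]
  have hdet : π A.det = 1 := by
    rw [RingHom.map_det, RingHom.mapMatrix_apply, hπ, Matrix.det_one]
  have hmem : A.det - 1 ∈ spIdeal := by
    rw [← Ideal.Quotient.eq_zero_iff_mem]
    show π (A.det - 1) = 0
    rw [π.map_sub, hdet, π.map_one, sub_self]
  have hval : (1 + S).det = (A.det : F) := by
    rw [← hmap, ← RingHom.mapMatrix_apply, ← RingHom.map_det]; rfl
  rw [hval]
  intro h0
  have hsp : SPf ((A.det - 1 : P) : F) := hmem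
  have hco : ((A.det - 1 : P) : F) = (A.det : F) - 1 := rfl
  rw [hco, h0] at hsp
  rcases hsp with h | h
  · simp at h
  · rw [zero_sub, RatFunc.intDegree_neg, RatFunc.intDegree_one] at h
    omega

end Youla

open Youla

set_option maxHeartbeats 2000000 in
/-- **Youla's parametrization (Theorem 1).** Given a DCF of the strictly proper plant `G`:
(i) for every stable `Q`, `Y_Q` and `Ỹ_Q` are invertible, `Y_Q⁻¹ X_Q = X̃_Q Ỹ_Q⁻¹`, and the
controller `K_Q = Y_Q⁻¹ X_Q` stabilizes `G`; (ii) every stabilizing controller is of this form. -/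
theorem youla_parametrization (Ω : Set ℂ) (m p : ℕ)
    (G : Matrix (Fin m) (Fin p) F) (hG : StrictlyProper G)
    (M : Matrix (Fin p) (Fin p) F) (N : Matrix (Fin m) (Fin p) F)
    (Mt : Matrix (Fin m) (Fin m) F) (Nt : Matrix (Fin m) (Fin p) F)
    (X : Matrix (Fin p) (Fin m) F) (Y : Matrix (Fin p) (Fin p) F)
    (Xt : Matrix (Fin p) (Fin m) F) (Yt : Matrix (Fin m) (Fin m) F)
    (hDCF : IsDCF Ω G M N Mt Nt X Y Xt Yt) :
    (∀ Q : Matrix (Fin p) (Fin m) F, MatStable Ω Q →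
      IsUnit (Y - Q * Nt).det ∧ IsUnit (Yt - N * Q).det ∧
      (Y - Q * Nt)⁻¹ * (X + Q * Mt) = (Xt + M * Q) * (Yt - N * Q)⁻¹ ∧
      Stabilizes Ω G ((Y - Q * Nt)⁻¹ * (X + Q * Mt))) ∧
    (∀ K : Matrix (Fin p) (Fin m) F, Stabilizes Ω G K →
      ∃ Q : Matrix (Fin p) (Fin m) F, MatStable Ω Q ∧
        K = (Y - Q * Nt)⁻¹ * (X + Q * Mt)) := by
  obtain ⟨stM, stN, stMt, stNt, stX, stY, stXt, stYt, hM, hMt, hLeft, hRight, hbez⟩ := hDCF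
  -- basic consequences of the factorizations
  have hN : G * M = N := by
    rw [hRight, Matrix.mul_assoc, Matrix.nonsing_inv_mul M hM, Matrix.mul_one]
  have hNt : Mt * G = Nt := by
    rw [hLeft, ← Matrix.mul_assoc, Matrix.mul_nonsing_inv Mt hMt, Matrix.one_mul]
  have hNsp : StrictlyProper N := by
    rw [← hN]; exact sp_mul_right hG (matStable_proper stM)
  have hNtsp : StrictlyProper Nt := by
    rw [← hNt]; exact sp_mul_left (matStable_proper stMt) hG
  -- the Bézout identities, blockwise
  have hUV : fromBlocks (Y*M + X*N) (Y*(-Xt) + X*Yt) ((-Nt)*M + Mt*N) ((-Nt)*(-Xt) + Mt*Yt)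
      = fromBlocks 1 0 0 1 := by
    rw [Matrix.fromBlocks_one, ← Matrix.fromBlocks_multiply]
    exact hbez
  obtain ⟨e1, e2, e3, e4⟩ := Matrix.fromBlocks_inj.mp hUV
  have e2' : Y*Xt = X*Yt := by
    rwa [Matrix.mul_neg, neg_add_eq_zero] at e2
  have e3' : Nt*M = Mt*N := by
    rwa [Matrix.neg_mul, neg_add_eq_zero] at e3
  have e4' : Nt*Xt + Mt*Yt = 1 := by
    rwa [Matrix.neg_mul, Matrix.mul_neg, neg_neg] at e4
  -- part (i)
  have key : ∀ Q : Matrix (Fin p) (Fin m) F, MatStable Ω Q →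
      IsUnit (Y - Q * Nt).det ∧ IsUnit (Yt - N * Q).det ∧
      (Y - Q * Nt)⁻¹ * (X + Q * Mt) = (Xt + M * Q) * (Yt - N * Q)⁻¹ ∧
      Stabilizes Ω G ((Y - Q * Nt)⁻¹ * (X + Q * Mt)) := by
    intro Q hQ
    -- stability of the perturbed blocks
    have stYQ : MatStable Ω (Y - Q*Nt) := matStable_sub stY (matStable_mul hQ stNt)
    have stXQ : MatStable Ω (X + Q*Mt) := matStable_add stX (matStable_mul hQ stMt)
    have stXtQ : MatStable Ω (Xt + M*Q) := matStable_add stXt (matStable_mul stM hQ)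
    have stYtQ : MatStable Ω (Yt - N*Q) := matStable_sub stYt (matStable_mul stN hQ)
    -- perturbed Bézout identities
    have q1 : (Y - Q*Nt) * M + (X + Q*Mt) * N = 1 := by
      have h1 : (Y - Q*Nt) * M + (X + Q*Mt) * N
          = Y*M + X*N + (Q*(Mt*N) - Q*(Nt*M)) := by
        simp only [Matrix.sub_mul, Matrix.add_mul, Matrix.mul_assoc]
        abel
      rw [h1, e3', sub_self, add_zero, e1]
    have q3 : Nt * (Xt + M*Q) + Mt * (Yt - N*Q) = 1 := by
      have h1 : Nt * (Xt + M*Q) + Mt * (Yt - N*Q)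
          = Nt*Xt + Mt*Yt + ((Nt*M)*Q - (Mt*N)*Q) := by
        simp only [Matrix.mul_add, Matrix.mul_sub, Matrix.mul_assoc]
        abel
      rw [h1, e3', sub_self, add_zero, e4']
    have q2 : (Y - Q*Nt) * (Xt + M*Q) = (X + Q*Mt) * (Yt - N*Q) := by
      have h3 : Y*(M*Q) = Q*(Nt*Xt) + Q*(Mt*Yt) - X*(N*Q) := by
        have h : Y*(M*Q) + X*(N*Q) = Q*(Nt*Xt) + Q*(Mt*Yt) := by
          calc Y*(M*Q) + X*(N*Q) = (Y*M + X*N)*Q := by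
                simp only [Matrix.add_mul, Matrix.mul_assoc]
            _ = Q := by rw [e1, Matrix.one_mul]
            _ = Q*(Nt*Xt + Mt*Yt) := by rw [e4', Matrix.mul_one]
            _ = Q*(Nt*Xt) + Q*(Mt*Yt) := by rw [Matrix.mul_add]
        exact eq_sub_of_add_eq h
      have e3'' : Nt*(M*Q) = Mt*(N*Q) := by
        rw [← Matrix.mul_assoc, ← Matrix.mul_assoc, e3']
      calc (Y - Q*Nt) * (Xt + M*Q)
          = Y*Xt + Y*(M*Q) - Q*(Nt*Xt) - Q*(Nt*(M*Q)) := by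
            simp only [Matrix.sub_mul, Matrix.mul_add, Matrix.mul_assoc]
            abel
        _ = X*Yt + (Q*(Nt*Xt) + Q*(Mt*Yt) - X*(N*Q)) - Q*(Nt*Xt) - Q*(Mt*(N*Q)) := by
            rw [e2', h3, e3'']
        _ = X*Yt - X*(N*Q) + (Q*(Mt*Yt) - Q*(Mt*(N*Q))) := by abel
        _ = (X + Q*Mt) * (Yt - N*Q) := by
            simp only [Matrix.add_mul, Matrix.mul_sub, Matrix.mul_assoc]
            abel
    -- invertibility of Y_Q
    have hdetYQ : IsUnit (Y - Q*Nt).det := by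
      have hsp : StrictlyProper (-((X + Q*Mt) * N)) :=
        sp_neg (sp_mul_left (matStable_proper stXQ) hNsp)
      have h5 : (Y - Q*Nt) * M = 1 + -((X + Q*Mt)*N) := by
        rw [← sub_eq_add_neg]
        exact eq_sub_of_add_eq q1
      have h6 : ((Y - Q*Nt) * M).det ≠ 0 := by
        rw [h5]; exact det_one_add_sp hsp
      rw [Matrix.det_mul] at h6
      exact isUnit_iff_ne_zero.mpr (left_ne_zero_of_mul h6)
    -- invertibility of Yt_Q
    have hdetYtQ : IsUnit (Yt - N*Q).det := by
      have hsp : StrictlyProper (-(Nt * (Xt + M*Q))) :=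
        sp_neg (sp_mul_right hNtsp (matStable_proper stXtQ))
      have h5 : Mt * (Yt - N*Q) = 1 + -(Nt * (Xt + M*Q)) := by
        rw [← sub_eq_add_neg]
        exact eq_sub_of_add_eq' q3
      have h6 : (Mt * (Yt - N*Q)).det ≠ 0 := by
        rw [h5]; exact det_one_add_sp hsp
      rw [Matrix.det_mul] at h6
      exact isUnit_iff_ne_zero.mpr (right_ne_zero_of_mul h6)
    -- the two representations agree
    have hKeq : (Y - Q*Nt)⁻¹ * (X + Q*Mt) = (Xt + M*Q) * (Yt - N*Q)⁻¹ := by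
      calc (Y - Q*Nt)⁻¹ * (X + Q*Mt)
          = (Y - Q*Nt)⁻¹ * (X + Q*Mt) * ((Yt - N*Q) * (Yt - N*Q)⁻¹) := by
            rw [Matrix.mul_nonsing_inv _ hdetYtQ, Matrix.mul_one]
        _ = (Y - Q*Nt)⁻¹ * ((X + Q*Mt) * (Yt - N*Q)) * (Yt - N*Q)⁻¹ := by
            simp only [Matrix.mul_assoc]
        _ = (Y - Q*Nt)⁻¹ * ((Y - Q*Nt) * (Xt + M*Q)) * (Yt - N*Q)⁻¹ := by rw [← q2]
        _ = (Xt + M*Q) * (Yt - N*Q)⁻¹ := by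
            rw [← Matrix.mul_assoc, Matrix.nonsing_inv_mul _ hdetYQ, Matrix.one_mul]
    refine ⟨hdetYQ, hdetYtQ, hKeq, ?_⟩
    -- stabilization
    set K : Matrix (Fin p) (Fin m) F := (Y - Q*Nt)⁻¹ * (X + Q*Mt) with hKdef
    have hYQK : (Y - Q*Nt) * K = X + Q*Mt := by
      rw [hKdef, ← Matrix.mul_assoc, Matrix.mul_nonsing_inv _ hdetYQ, Matrix.one_mul]
    have hK : K = (Xt + M*Q) * (Yt - N*Q)⁻¹ := hKeq
    -- left inverse of (1 + G K)
    have hstep : ((Yt - N*Q) * Mt) * (1 + G * K) = 1 := by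
      have hNtXtQ : Nt * (Xt + M*Q) = 1 - Mt * (Yt - N*Q) := eq_sub_of_add_eq q3
      calc ((Yt - N*Q) * Mt) * (1 + G * K)
          = (Yt - N*Q) * Mt + (Yt - N*Q) * (Mt * (G * K)) := by
            rw [Matrix.mul_add, Matrix.mul_one, Matrix.mul_assoc]
        _ = (Yt - N*Q) * Mt + (Yt - N*Q) * (Nt * ((Xt + M*Q) * (Yt - N*Q)⁻¹)) := by
            rw [← Matrix.mul_assoc Mt G K, hNt, hK]
        _ = (Yt - N*Q) * Mt + (Yt - N*Q) * ((1 - Mt * (Yt - N*Q)) * (Yt - N*Q)⁻¹) := by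
            rw [← Matrix.mul_assoc Nt _ _, hNtXtQ]
        _ = (Yt - N*Q) * Mt + (Yt - N*Q) * ((Yt - N*Q)⁻¹ - Mt) := by
            have hinner : (1 - Mt * (Yt - N*Q)) * (Yt - N*Q)⁻¹ = (Yt - N*Q)⁻¹ - Mt := by
              rw [Matrix.sub_mul, Matrix.one_mul, Matrix.mul_assoc,
                Matrix.mul_nonsing_inv _ hdetYtQ, Matrix.mul_one]
            rw [hinner]
        _ = (Yt - N*Q) * Mt + (1 - (Yt - N*Q) * Mt) := by
            rw [Matrix.mul_sub, Matrix.mul_nonsing_inv _ hdetYtQ]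
        _ = 1 := by abel
    have hu1 : IsUnit (1 + G * K).det := Matrix.isUnit_det_of_left_inverse hstep
    have hinv1 : (1 + G * K)⁻¹ = (Yt - N*Q) * Mt := Matrix.inv_eq_left_inv hstep
    -- right inverse of 1 + K G
    have h8 : (Y - Q*Nt) * ((1 + K*G) * M) = 1 := by
      calc (Y - Q*Nt) * ((1 + K*G) * M)
          = (Y - Q*Nt)*M + ((Y - Q*Nt)*K)*(G*M) := by
            simp only [Matrix.add_mul, Matrix.one_mul, Matrix.mul_add, Matrix.mul_assoc]
        _ = (Y - Q*Nt)*M + (X + Q*Mt)*N := by rw [hN, hYQK]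
        _ = 1 := q1
    have h9 : (1 + K*G) * (M * (Y - Q*Nt)) = 1 := by
      rw [← Matrix.mul_assoc]
      exact mul_eq_one_comm.mp h8
    have hinv4 : (1 + K*G)⁻¹ = M * (Y - Q*Nt) := Matrix.inv_eq_right_inv h9
    refine ⟨hu1, ?_, ?_, ?_, ?_⟩
    · rw [hinv1]; exact matStable_mul stYtQ stMt
    · have : (1 + G * K)⁻¹ * G = (Yt - N*Q) * Nt := by
        rw [hinv1, Matrix.mul_assoc, hNt]
      rw [this]; exact matStable_mul stYtQ stNt
    · have : K * (1 + G * K)⁻¹ = (Xt + M*Q) * Mt := by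
        rw [hinv1, hK, Matrix.mul_assoc, ← Matrix.mul_assoc ((Yt - N*Q)⁻¹) _ _,
          Matrix.nonsing_inv_mul _ hdetYtQ, Matrix.one_mul]
      rw [this]; exact matStable_mul stXtQ stMt
    · rw [hinv4]; exact matStable_mul stM stYQ
  refine ⟨key, ?_⟩
  -- part (ii)
  rintro K ⟨hu, h1, h2, h3, h4⟩
  have huKG : IsUnit (1 + K*G).det := by
    rw [Matrix.det_one_add_mul_comm]; exact hu
  have hcomm : (1 + K*G) * K = K * (1 + G*K) := by
    simp only [Matrix.mul_add, Matrix.add_mul, Matrix.mul_one, Matrix.one_mul,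
      Matrix.mul_assoc]
  have hpush : K * (1 + G*K)⁻¹ = (1 + K*G)⁻¹ * K := by
    have hKK : (K * (1 + G*K)) * (1 + G*K)⁻¹ = K := by
      rw [Matrix.mul_assoc, Matrix.mul_nonsing_inv _ hu, Matrix.mul_one]
    calc K * (1 + G*K)⁻¹
        = ((1 + K*G)⁻¹ * (1 + K*G)) * (K * (1 + G*K)⁻¹) := by
          rw [Matrix.nonsing_inv_mul _ huKG, Matrix.one_mul]
      _ = (1 + K*G)⁻¹ * (((1 + K*G) * K) * (1 + G*K)⁻¹) := by
          simp only [Matrix.mul_assoc]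
      _ = (1 + K*G)⁻¹ * ((K * (1 + G*K)) * (1 + G*K)⁻¹) := by rw [hcomm]
      _ = (1 + K*G)⁻¹ * K := by rw [hKK]
  have hKH1G : K * ((1 + G*K)⁻¹ * G) = 1 - (1 + K*G)⁻¹ := by
    calc K * ((1 + G*K)⁻¹ * G) = (K * (1 + G*K)⁻¹) * G := by rw [Matrix.mul_assoc]
      _ = (1 + K*G)⁻¹ * (K*G) := by rw [hpush, Matrix.mul_assoc]
      _ = (1 + K*G)⁻¹ * ((1 + K*G) - 1) := by rw [add_sub_cancel_left]
      _ = 1 - (1 + K*G)⁻¹ := by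
          rw [Matrix.mul_sub, Matrix.nonsing_inv_mul _ huKG, Matrix.mul_one]
  set Q : Matrix (Fin p) (Fin m) F := (Y*K - X) * (1 + G*K)⁻¹ * (Yt + G*Xt) with hQdef
  have hA : MatStable Ω ((Y*K - X) * (1 + G*K)⁻¹) := by
    have hh : (Y*K - X) * (1 + G*K)⁻¹ = Y*(K*(1 + G*K)⁻¹) - X*(1 + G*K)⁻¹ := by
      simp only [Matrix.sub_mul, Matrix.mul_assoc]
    rw [hh]
    exact matStable_sub (matStable_mul stY h3) (matStable_mul stX h1)
  have hB : MatStable Ω (((Y*K - X) * (1 + G*K)⁻¹) * G) := by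
    have hh : ((Y*K - X) * (1 + G*K)⁻¹) * G
        = Y*(K*((1 + G*K)⁻¹*G)) - X*((1 + G*K)⁻¹*G) := by
      simp only [Matrix.sub_mul, Matrix.mul_assoc]
    rw [hh, hKH1G]
    exact matStable_sub (matStable_mul stY (matStable_sub matStable_one h4))
      (matStable_mul stX h2)
  have hQst : MatStable Ω Q := by
    have hh : Q = ((Y*K - X) * (1 + G*K)⁻¹) * Yt + (((Y*K - X) * (1 + G*K)⁻¹) * G) * Xt := by
      rw [hQdef]
      simp only [Matrix.mul_add, Matrix.mul_assoc]
    rw [hh]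
    exact matStable_add (matStable_mul hA stYt) (matStable_mul hB stXt)
  have hMtYtGXt : Mt * (Yt + G*Xt) = 1 := by
    rw [Matrix.mul_add, ← Matrix.mul_assoc, hNt, add_comm]
    exact e4'
  have hYtMt : (Yt + G*Xt) * Mt = 1 := mul_eq_one_comm.mp hMtYtGXt
  have hQL : Q * (Mt + Nt*K) = Y*K - X := by
    have hMtfac : Mt + Nt*K = Mt * (1 + G*K) := by
      rw [Matrix.mul_add, Matrix.mul_one, ← Matrix.mul_assoc, hNt]
    calc Q * (Mt + Nt*K)
        = ((Y*K - X) * (1 + G*K)⁻¹) * (((Yt + G*Xt) * Mt) * (1 + G*K)) := by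
          rw [hMtfac, hQdef]
          simp only [Matrix.mul_assoc]
      _ = ((Y*K - X) * (1 + G*K)⁻¹) * (1 + G*K) := by rw [hYtMt, Matrix.one_mul]
      _ = Y*K - X := by
          rw [Matrix.mul_assoc, Matrix.nonsing_inv_mul _ hu, Matrix.mul_one]
  have hQMt : Q*Mt + Q*(Nt*K) = Y*K - X := by
    rw [← Matrix.mul_add]; exact hQL
  have hYQK : (Y - Q*Nt) * K = X + Q*Mt := by
    have h' : Q*(Nt*K) = (Y*K - X) - Q*Mt := eq_sub_of_add_eq' hQMt
    calc (Y - Q*Nt) * K = Y*K - Q*(Nt*K) := by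
          simp only [Matrix.sub_mul, Matrix.mul_assoc]
      _ = Y*K - ((Y*K - X) - Q*Mt) := by rw [h']
      _ = X + Q*Mt := by abel
  obtain ⟨hdY, -, -, -⟩ := key Q hQst
  refine ⟨Q, hQst, ?_⟩
  rw [← hYQK, ← Matrix.mul_assoc, Matrix.nonsing_inv_mul _ hdY, Matrix.one_mul]
end
end

section
/- (Proposition 1.) Let (M, N, M̃, Ñ, X, Y, X̃, Ỹ) be a DCF of the strictly proper plant G ∈ F^{m×p} over Ω, and let Q ∈ 𝔸^{p×m} be stable. Then Y_Q is invertible over F, I + G·K_Q is invertible over F, and M·X_Q = K_Q·(I + G·K_Q)⁻¹ = X̃_Q·M̃, where K_Q = Y_Q⁻¹·X_Q. -/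
open Matrix

noncomputable section

/-- Valuation at infinity on `F`. -/
def vinf : Valuation F (WithZero (Multiplicative ℤ)) :=
  @FunctionField.inftyValuation ℝ _ (Classical.decEq _)

lemma vinf_of_nonzero {f : F} (hf : f ≠ 0) : vinf f = Multiplicative.ofAdd f.intDegree :=
  @FunctionField.inftyValuation_of_nonzero ℝ _ (Classical.decEq _) _ hf

lemma vinf_le_one {f : F} (h : f.intDegree ≤ 0) : vinf f ≤ 1 := by
  by_cases hf : f = 0
  · simp [hf]
  · rw [vinf_of_nonzero hf, ← WithZero.coe_one, WithZero.coe_le_coe,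
      ← ofAdd_zero, Multiplicative.ofAdd_le]
    exact h

lemma vinf_lt_one {f : F} (h : f = 0 ∨ f.intDegree < 0) : vinf f < 1 := by
  rcases h with h | h
  · simpa [h] using (zero_lt_one : (0 : WithZero (Multiplicative ℤ)) < 1)
  · by_cases hf : f = 0
    · simpa [hf] using (zero_lt_one : (0 : WithZero (Multiplicative ℤ)) < 1)
    · rw [vinf_of_nonzero hf, ← WithZero.coe_one, WithZero.coe_lt_coe,
        ← ofAdd_zero, Multiplicative.ofAdd_lt]
      exact h

lemma vinf_prod_le_one {ι : Type*} (s : Finset ι) (a : ι → F)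
    (ha : ∀ i ∈ s, vinf (a i) ≤ 1) : vinf (∏ i ∈ s, a i) ≤ 1 := by
  rw [_root_.map_prod]
  exact Finset.prod_le_one' ha

lemma vinf_prod_sub_lt {ι : Type*} (s : Finset ι) (a b : ι → F)
    (ha : ∀ i ∈ s, vinf (a i) ≤ 1) (hb : ∀ i ∈ s, vinf (b i) < 1) :
    vinf (∏ i ∈ s, (a i + b i) - ∏ i ∈ s, a i) < 1 := by
  induction s using Finset.cons_induction with
  | empty => simpa using (zero_lt_one : (0 : WithZero (Multiplicative ℤ)) < 1)
  | cons j s hj ih =>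
    have haj := ha j (Finset.mem_cons_self j s)
    have hbj := hb j (Finset.mem_cons_self j s)
    have ha' : ∀ i ∈ s, vinf (a i) ≤ 1 := fun i hi => ha i (Finset.mem_cons_of_mem hi)
    have hb' : ∀ i ∈ s, vinf (b i) < 1 := fun i hi => hb i (Finset.mem_cons_of_mem hi)
    have hP' : vinf (∏ i ∈ s, (a i + b i)) ≤ 1 :=
      vinf_prod_le_one s _ fun i hi =>
        le_trans (vinf.map_add _ _) (max_le (ha' i hi) (le_of_lt (hb' i hi)))
    rw [Finset.prod_cons, Finset.prod_cons]
    have key : (a j + b j) * ∏ i ∈ s, (a i + b i) - a j * ∏ i ∈ s, a i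
        = a j * (∏ i ∈ s, (a i + b i) - ∏ i ∈ s, a i) + b j * ∏ i ∈ s, (a i + b i) := by
      ring
    rw [key]
    refine lt_of_le_of_lt (vinf.map_add _ _) (max_lt ?_ ?_)
    · rw [_root_.map_mul]
      calc vinf (a j) * vinf (∏ i ∈ s, (a i + b i) - ∏ i ∈ s, a i)
          ≤ 1 * vinf (∏ i ∈ s, (a i + b i) - ∏ i ∈ s, a i) := mul_le_mul_left haj _
        _ = vinf (∏ i ∈ s, (a i + b i) - ∏ i ∈ s, a i) := one_mul _
        _ < 1 := ih ha' hb'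
    · rw [_root_.map_mul]
      calc vinf (b j) * vinf (∏ i ∈ s, (a i + b i))
          ≤ vinf (b j) * 1 := mul_le_mul_right hP' _
        _ = vinf (b j) := mul_one _
        _ < 1 := hbj

lemma vinf_det_le_one {n : ℕ} (A : Matrix (Fin n) (Fin n) F)
    (hA : ∀ i j, vinf (A i j) ≤ 1) : vinf A.det ≤ 1 := by
  rw [Matrix.det_apply']
  refine Valuation.map_sum_le _ fun σ _ => ?_
  rw [_root_.map_mul]
  have h1 : vinf (((Equiv.Perm.sign σ : ℤ) : F)) = 1 := by
    rcases Int.units_eq_one_or (Equiv.Perm.sign σ) with h | h <;>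
      simp [h, Valuation.map_neg]
  rw [h1, one_mul]
  exact vinf_prod_le_one _ _ fun i _ => hA _ _

lemma vinf_det_add_sub_lt {n : ℕ} (A B : Matrix (Fin n) (Fin n) F)
    (hA : ∀ i j, vinf (A i j) ≤ 1) (hB : ∀ i j, vinf (B i j) < 1) :
    vinf ((A + B).det - A.det) < 1 := by
  rw [Matrix.det_apply', Matrix.det_apply', ← Finset.sum_sub_distrib]
  refine Valuation.map_sum_lt _ one_ne_zero fun σ _ => ?_
  rw [← mul_sub, _root_.map_mul]
  have h1 : vinf (((Equiv.Perm.sign σ : ℤ) : F)) = 1 := by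
    rcases Int.units_eq_one_or (Equiv.Perm.sign σ) with h | h <;>
      simp [h, Valuation.map_neg]
  rw [h1, one_mul]
  have := vinf_prod_sub_lt Finset.univ (fun i => A (σ i) i) (fun i => B (σ i) i)
    (fun i _ => hA _ _) (fun i _ => hB _ _)
  simpa [Matrix.add_apply] using this

lemma one_add_mul_swap {a b : Type} [Fintype a] [Fintype b] [DecidableEq a] [DecidableEq b]
    (A : Matrix a b F) (B : Matrix b a F) : A * (1 + B * A) = (1 + A * B) * A := by
  rw [Matrix.mul_add, Matrix.add_mul, Matrix.mul_one, Matrix.one_mul, Matrix.mul_assoc]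

set_option maxHeartbeats 1000000 in
/-- **Proposition 1.** For a DCF of the strictly proper plant `G` and stable `Q`,
`Y_Q` and `I + G·K_Q` are invertible and `M·X_Q = K_Q(I+G·K_Q)⁻¹ = X̃_Q·M̃`. -/
theorem prop_MXQ (Ω : Set ℂ) (m p : ℕ)
    (G : Matrix (Fin m) (Fin p) F) (hG : StrictlyProper G)
    (M : Matrix (Fin p) (Fin p) F) (N : Matrix (Fin m) (Fin p) F)
    (Mt : Matrix (Fin m) (Fin m) F) (Nt : Matrix (Fin m) (Fin p) F)
    (X : Matrix (Fin p) (Fin m) F) (Y : Matrix (Fin p) (Fin p) F)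
    (Xt : Matrix (Fin p) (Fin m) F) (Yt : Matrix (Fin m) (Fin m) F)
    (hDCF : IsDCF Ω G M N Mt Nt X Y Xt Yt)
    (Q : Matrix (Fin p) (Fin m) F) (hQ : MatStable Ω Q) :
    IsUnit (Y - Q * Nt).det ∧
    IsUnit (1 + G * ((Y - Q * Nt)⁻¹ * (X + Q * Mt))).det ∧
    M * (X + Q * Mt) =
      ((Y - Q * Nt)⁻¹ * (X + Q * Mt)) *
        (1 + G * ((Y - Q * Nt)⁻¹ * (X + Q * Mt)))⁻¹ ∧
    (Xt + M * Q) * Mt =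
      ((Y - Q * Nt)⁻¹ * (X + Q * Mt)) *
        (1 + G * ((Y - Q * Nt)⁻¹ * (X + Q * Mt)))⁻¹ := by
  set YQ := Y - Q * Nt with hYQdef
  set XQ := X + Q * Mt with hXQdef
  -- block equations from the Bézout identity
  have hone : (1 : Matrix (Fin p ⊕ Fin m) (Fin p ⊕ Fin m) F) =
      Matrix.fromBlocks 1 0 0 1 := Matrix.fromBlocks_one.symm
  have bez' := hDCF.bezout
  rw [Matrix.fromBlocks_multiply, hone] at bez'
  have e11 : Y * M + X * N = 1 := by
    have := congrArg Matrix.toBlocks₁₁ bez'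
    simpa only [Matrix.toBlocks_fromBlocks₁₁] using this
  have e21 : -Nt * M + Mt * N = 0 := by
    have := congrArg Matrix.toBlocks₂₁ bez'
    simpa only [Matrix.toBlocks_fromBlocks₂₁] using this
  have e21' : Mt * N = Nt * M := by
    have h := e21
    rw [Matrix.neg_mul, neg_add_eq_zero] at h
    exact h.symm
  -- reversed Bézout identity
  have rev := mul_eq_one_comm.mp hDCF.bezout
  rw [Matrix.fromBlocks_multiply, hone] at rev
  have r12 : M * X + -Xt * Mt = 0 := by
    have := congrArg Matrix.toBlocks₁₂ rev
    simpa only [Matrix.toBlocks_fromBlocks₁₂] using this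
  have hMX : M * X = Xt * Mt := by
    have h := r12
    rw [Matrix.neg_mul, add_neg_eq_zero] at h
    exact h
  have hN : G * M = N := by
    rw [hDCF.hRight, Matrix.nonsing_inv_mul_cancel_right _ _ hDCF.hM]
  have key : (YQ + XQ * G) * M = 1 := by
    have : (YQ + XQ * G) * M = Y * M + X * N + Q * (Mt * N) - Q * (Nt * M) := by
      rw [hYQdef, hXQdef, Matrix.add_mul, Matrix.mul_assoc XQ, hN, Matrix.sub_mul,
        Matrix.add_mul, Matrix.mul_assoc, Matrix.mul_assoc]
      abel
    rw [this, e21', e11]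
    abel
  have hdS : IsUnit (YQ + XQ * G).det := by
    have h := congrArg Matrix.det key
    rw [Matrix.det_mul, Matrix.det_one] at h
    exact IsUnit.of_mul_eq_one _ h
  -- analytic part: `YQ.det ≠ 0`
  have hYQprop : ∀ i j, vinf (YQ i j) ≤ 1 := by
    intro i j
    have h1 : vinf ((Q * Nt) i j) ≤ 1 := by
      rw [Matrix.mul_apply]
      refine Valuation.map_sum_le _ fun k _ => ?_
      rw [_root_.map_mul]
      calc vinf (Q i k) * vinf (Nt k j) ≤ 1 * 1 :=
            mul_le_mul' (vinf_le_one (hQ i k).1) (vinf_le_one (hDCF.stNt k j).1)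
        _ = 1 := one_mul 1
    have h2 : vinf (Y i j) ≤ 1 := vinf_le_one (hDCF.stY i j).1
    have : YQ i j = Y i j - (Q * Nt) i j := rfl
    rw [this, sub_eq_add_neg]
    exact le_trans (vinf.map_add _ _) (max_le h2 (by rwa [Valuation.map_neg]))
  have hXQGlt : ∀ i j, vinf ((XQ * G) i j) < 1 := by
    intro i j
    rw [Matrix.mul_apply]
    refine Valuation.map_sum_lt _ one_ne_zero fun k _ => ?_
    rw [_root_.map_mul]
    have hXQk : vinf (XQ i k) ≤ 1 := by
      have h1 : vinf ((Q * Mt) i k) ≤ 1 := by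
        rw [Matrix.mul_apply]
        refine Valuation.map_sum_le _ fun l _ => ?_
        rw [_root_.map_mul]
        calc vinf (Q i l) * vinf (Mt l k) ≤ 1 * 1 :=
              mul_le_mul' (vinf_le_one (hQ i l).1) (vinf_le_one (hDCF.stMt l k).1)
          _ = 1 := one_mul 1
      have : XQ i k = X i k + (Q * Mt) i k := rfl
      rw [this]
      exact le_trans (vinf.map_add _ _) (max_le (vinf_le_one (hDCF.stX i k).1) h1)
    calc vinf (XQ i k) * vinf (G k j) ≤ 1 * vinf (G k j) := mul_le_mul_left hXQk _
      _ = vinf (G k j) := one_mul _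
      _ < 1 := vinf_lt_one (hG k j)
  have hSge : (1 : WithZero (Multiplicative ℤ)) ≤ vinf (YQ + XQ * G).det := by
    have h := congrArg Matrix.det key
    rw [Matrix.det_mul, Matrix.det_one] at h
    have hv : vinf (YQ + XQ * G).det * vinf M.det = 1 := by
      rw [← _root_.map_mul, h, _root_.map_one]
    have hMle : vinf M.det ≤ 1 := vinf_det_le_one M fun i j => vinf_le_one (hDCF.stM i j).1
    calc (1 : WithZero (Multiplicative ℤ)) = vinf (YQ + XQ * G).det * vinf M.det := hv.symm
      _ ≤ vinf (YQ + XQ * G).det * 1 := mul_le_mul_right hMle _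
      _ = vinf (YQ + XQ * G).det := mul_one _
  have hYQdet : IsUnit YQ.det := by
    rw [isUnit_iff_ne_zero]
    intro h0
    have hlt : vinf ((YQ + XQ * G).det - YQ.det) < 1 :=
      vinf_det_add_sub_lt YQ (XQ * G) hYQprop hXQGlt
    rw [h0, sub_zero] at hlt
    exact absurd (lt_of_le_of_lt hSge hlt) (lt_irrefl _)
  -- algebraic conclusions
  set K := YQ⁻¹ * XQ with hKdef
  have hKG : 1 + K * G = YQ⁻¹ * (YQ + XQ * G) := by
    rw [Matrix.mul_add, Matrix.nonsing_inv_mul _ hYQdet, hKdef, Matrix.mul_assoc]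
  have hGK : IsUnit (1 + G * K).det := by
    rw [Matrix.det_one_add_mul_comm, hKG, Matrix.det_mul]
    refine IsUnit.mul ?_ hdS
    rw [Matrix.det_nonsing_inv]
    exact isUnit_iff_ne_zero.mpr (by
      simp [Ring.inverse_eq_inv', inv_ne_zero (isUnit_iff_ne_zero.mp hYQdet)])
  have hKGu : IsUnit (1 + K * G).det := by
    rw [← Matrix.det_one_add_mul_comm]
    exact hGK
  have hinv : (1 + K * G)⁻¹ = M * YQ := by
    apply Matrix.inv_eq_right_inv
    rw [hKG]
    calc YQ⁻¹ * (YQ + XQ * G) * (M * YQ)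
        = YQ⁻¹ * ((YQ + XQ * G) * M * YQ) := by
          simp only [Matrix.mul_assoc]
      _ = YQ⁻¹ * YQ := by rw [key, Matrix.one_mul]
      _ = 1 := Matrix.nonsing_inv_mul _ hYQdet
  have comm : K * (1 + G * K) = (1 + K * G) * K := one_add_mul_swap K G
  have swap : K * (1 + G * K)⁻¹ = (1 + K * G)⁻¹ * K := by
    have h1 : (1 + K * G) * (K * (1 + G * K)⁻¹) = K := by
      rw [← Matrix.mul_assoc (1 + K * G) K ((1 + G * K)⁻¹), ← comm,
        Matrix.mul_nonsing_inv_cancel_right _ _ hGK]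
    calc K * (1 + G * K)⁻¹
        = (1 + K * G)⁻¹ * ((1 + K * G) * (K * (1 + G * K)⁻¹)) :=
          (Matrix.nonsing_inv_mul_cancel_left _ _ hKGu).symm
      _ = (1 + K * G)⁻¹ * K := by rw [h1]
  have main : M * XQ = K * (1 + G * K)⁻¹ := by
    rw [swap, hinv, hKdef, Matrix.mul_assoc, Matrix.mul_nonsing_inv_cancel_left _ _ hYQdet]
  refine ⟨hYQdet, hGK, main, ?_⟩
  rw [← main, hXQdef, Matrix.add_mul, Matrix.mul_add, ← hMX, Matrix.mul_assoc]
end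
end

section
/- (Remark 4: invertibility of the feedback transformation.) Let G ∈ F^{m×p} be strictly proper. For every proper K ∈ F^{p×m} (all entries have intDegree ≤ 0), the matrix I + G·K is invertible over F, the matrix h_G(K) := K·(I + G·K)⁻¹ is proper, I − G·h_G(K) is invertible over F, and h_G(K)·(I − G·h_G(K))⁻¹ = K. Consequently, the map K ↦ K·(I+GK)⁻¹ is a bijection of the set of proper matrices in F^{p×m} onto itself, with inverse L ↦ L·(I−GL)⁻¹. -/
open Matrix

noncomputable section

namespace Rmk4
abbrev Pr (f : F) : Prop := f.intDegree ≤ 0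
abbrev SPr (f : F) : Prop := f = 0 ∨ f.intDegree < 0

lemma Pr_zero : Pr 0 := by simp [Pr, RatFunc.intDegree_zero]
lemma Pr_one : Pr 1 := le_of_eq RatFunc.intDegree_one
lemma SPr_pr {f : F} (h : SPr f) : Pr f := by
  rcases h with h | h
  · simp [h, Pr, RatFunc.intDegree_zero]
  · exact h.le

lemma Pr_add {f g : F} (hf : Pr f) (hg : Pr g) : Pr (f + g) := by
  by_cases hfg : f + g = 0
  · rw [hfg]; exact Pr_zero
  by_cases h0 : g = 0
  · simpa [h0] using hf
  exact le_trans (RatFunc.intDegree_add_le h0 hfg) (max_le hf hg)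

lemma Pr_mul {f g : F} (hf : Pr f) (hg : Pr g) : Pr (f * g) := by
  by_cases h1 : f = 0; · simpa [h1] using Pr_zero
  by_cases h2 : g = 0; · simpa [h2] using Pr_zero
  rw [Pr, RatFunc.intDegree_mul h1 h2]; omega

lemma Pr_neg {f : F} (hf : Pr f) : Pr (-f) := by rwa [Pr, RatFunc.intDegree_neg]

lemma SPr_add {f g : F} (hf : SPr f) (hg : SPr g) : SPr (f + g) := by
  rcases hf with rfl | hf; · simpa using hg
  rcases hg with rfl | hg; · simpa [Or.inr hf]
  by_cases hfg : f + g = 0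
  · exact Or.inl hfg
  refine Or.inr (lt_of_le_of_lt (RatFunc.intDegree_add_le ?_ hfg) ?_)
  · intro h; rw [h] at hg; simp [RatFunc.intDegree_zero] at hg
  · exact max_lt hf hg

lemma SPr_mul_left {f g : F} (hf : Pr f) (hg : SPr g) : SPr (f * g) := by
  rcases hg with rfl | hg; · exact Or.inl (by simp)
  by_cases h1 : f = 0; · exact Or.inl (by simp [h1])
  have h2 : g ≠ 0 := by intro h; rw [h] at hg; simp [RatFunc.intDegree_zero] at hg
  exact Or.inr (by rw [RatFunc.intDegree_mul h1 h2]; omega)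

lemma SPr_mul_right {f g : F} (hf : SPr f) (hg : Pr g) : SPr (f * g) := by
  rw [mul_comm]; exact SPr_mul_left hg hf

lemma one_add_SPr {s : F} (hs : SPr s) : 1 + s ≠ 0 ∧ (1 + s).intDegree = 0 := by
  have hne : (1 : F) + s ≠ 0 := by
    intro h
    have : s = -1 := eq_neg_of_add_eq_zero_right h
    rcases hs with h0 | hd
    · rw [h0] at this; exact one_ne_zero (neg_eq_zero.mp this.symm)
    · rw [this, RatFunc.intDegree_neg, RatFunc.intDegree_one] at hd; omega
  refine ⟨hne, ?_⟩
  rcases hs with rfl | hd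
  · simpa using RatFunc.intDegree_one
  have hs0 : s ≠ 0 := by intro h; rw [h] at hd; simp [RatFunc.intDegree_zero] at hd
  have hub : (1 + s).intDegree ≤ 0 := by
    have := RatFunc.intDegree_add_le hs0 hne
    rw [RatFunc.intDegree_one] at this; omega
  have hlb : 0 ≤ (1 + s).intDegree := by
    have h1 : (1 : F) = (1 + s) + (-s) := by ring
    have hns : (-s : F) ≠ 0 := neg_ne_zero.mpr hs0
    have h2 : ((1 + s) + (-s)).intDegree ≤ max (1 + s).intDegree (-s).intDegree :=
      RatFunc.intDegree_add_le hns (by rw [← h1]; exact one_ne_zero)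
    rw [← h1, RatFunc.intDegree_one, RatFunc.intDegree_neg] at h2
    omega
  omega

lemma Pr_inv {d : F} (hd : d ≠ 0) (h : d.intDegree = 0) : Pr d⁻¹ := by
  have : (d * d⁻¹).intDegree = d.intDegree + d⁻¹.intDegree :=
    RatFunc.intDegree_mul hd (inv_ne_zero hd)
  rw [mul_inv_cancel₀ hd, RatFunc.intDegree_one] at this
  rw [Pr]; omega

lemma Pr_sum {ι : Type*} (s : Finset ι) (f : ι → F) (h : ∀ i ∈ s, Pr (f i)) :
    Pr (∑ i ∈ s, f i) :=
  Finset.sum_induction f Pr (fun _ _ => Pr_add) Pr_zero h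

lemma SPr_sum {ι : Type*} (s : Finset ι) (f : ι → F) (h : ∀ i ∈ s, SPr (f i)) :
    SPr (∑ i ∈ s, f i) :=
  Finset.sum_induction f SPr (fun _ _ => SPr_add) (Or.inl rfl) h

lemma Pr_prod {ι : Type*} (s : Finset ι) (f : ι → F) (h : ∀ i ∈ s, Pr (f i)) :
    Pr (∏ i ∈ s, f i) :=
  Finset.prod_induction f Pr (fun _ _ => Pr_mul) Pr_one h

def Odeg : Subring F where
  carrier := {f | f.intDegree ≤ 0}
  mul_mem' := Pr_mul
  one_mem' := Pr_one
  add_mem' := Pr_add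
  zero_mem' := Pr_zero
  neg_mem' := Pr_neg

def mdeg : Ideal Odeg where
  carrier := {f | SPr (f : F)}
  add_mem' := SPr_add
  zero_mem' := Or.inl rfl
  smul_mem' := fun c x hx => SPr_mul_left c.2 hx

lemma ProperM_det {n : ℕ} {M : Matrix (Fin n) (Fin n) F} (h : ProperM M) : Pr M.det := by
  rw [Matrix.det_apply]
  refine Pr_sum _ _ fun σ _ => ?_
  have hp : Pr (∏ i, M (σ i) i) := Pr_prod _ _ fun i _ => h _ _
  rcases Int.units_eq_one_or (Equiv.Perm.sign σ) with hs | hs <;> rw [hs]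
  · simpa using hp
  · simpa using Pr_neg hp

set_option synthInstance.maxHeartbeats 1000000 in
lemma ProperM_inv {n : ℕ} {M : Matrix (Fin n) (Fin n) F} (h : ProperM M)
    (h0 : M.det ≠ 0) (hdeg : M.det.intDegree = 0) : ProperM M⁻¹ := by
  intro i j
  rw [Matrix.inv_def]
  have hadj : Pr (M.adjugate i j) := by
    rw [Matrix.adjugate_apply]
    refine ProperM_det fun a b => ?_
    rw [Matrix.updateRow_apply]
    split
    · rcases eq_or_ne b i with rfl | hb
      · simpa [Pi.single_eq_same] using Pr_one
      · simpa [Pi.single_eq_of_ne hb] using Pr_zero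
    · exact h _ _
  rw [Matrix.smul_apply, Ring.inverse_eq_inv, smul_eq_mul]
  exact Pr_mul (Pr_inv h0 hdeg) hadj

lemma det_one_add_SPr {n : ℕ} {S : Matrix (Fin n) (Fin n) F} (hS : StrictlyProper S) :
    SPr ((1 + S).det - 1) := by
  have hP : ProperM (1 + S) := fun i j => by
    refine Pr_add ?_ (SPr_pr (hS i j))
    rcases eq_or_ne i j with rfl | hij
    · simpa [Matrix.one_apply_eq] using Pr_one
    · simpa [Matrix.one_apply_ne hij] using Pr_zero
  set M : Matrix (Fin n) (Fin n) Odeg := fun i j => ⟨(1 + S) i j, hP i j⟩ with hM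
  have hmap : M.map Odeg.subtype = 1 + S := by ext i j; rfl
  have hdet : (Odeg.subtype M.det : F) = (1 + S).det := by
    rw [RingHom.map_det, RingHom.mapMatrix_apply, hmap]
  set π := Ideal.Quotient.mk mdeg with hπ
  have hM1 : M.map π = (1 : Matrix (Fin n) (Fin n) Odeg).map π := by
    ext i j
    simp only [Matrix.map_apply]
    refine Ideal.Quotient.eq.mpr ?_
    show SPr ((M i j - (1 : Matrix (Fin n) (Fin n) Odeg) i j : Odeg) : F)
    have : ((M i j - (1 : Matrix (Fin n) (Fin n) Odeg) i j : Odeg) : F)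
        = (1 + S) i j - (1 : Matrix (Fin n) (Fin n) F) i j := by
      push_cast [hM]
      rcases eq_or_ne i j with rfl | hij
      · simp [Matrix.one_apply_eq]
      · simp [Matrix.one_apply_ne hij]
    rw [this]
    have : (1 + S) i j - (1 : Matrix (Fin n) (Fin n) F) i j = S i j := by
      simp [Matrix.add_apply]
    rw [this]; exact hS i j
  have hq : π M.det = π 1 := by
    rw [RingHom.map_det, RingHom.mapMatrix_apply, hM1,
      Matrix.map_one _ (map_zero π) (map_one π), Matrix.det_one, _root_.map_one]
  have hmem : M.det - 1 ∈ mdeg := Ideal.Quotient.eq.mp hq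
  have : ((M.det - 1 : Odeg) : F) = (1 + S).det - 1 := by
    push_cast
    rw [← hdet]; rfl
  rw [← this]; exact hmem

lemma SP_matmul {m p q : ℕ} {G : Matrix (Fin m) (Fin p) F} {K : Matrix (Fin p) (Fin q) F}
    (hG : StrictlyProper G) (hK : ProperM K) : StrictlyProper (G * K) := fun i j => by
  rw [Matrix.mul_apply]
  exact SPr_sum _ _ fun k _ => SPr_mul_right (hG i k) (hK k j)

lemma ProperM_mul {m p q : ℕ} {G : Matrix (Fin m) (Fin p) F} {K : Matrix (Fin p) (Fin q) F}
    (hG : ProperM G) (hK : ProperM K) : ProperM (G * K) := fun i j => by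
  rw [Matrix.mul_apply]
  exact Pr_sum _ _ fun k _ => Pr_mul (hG i k) (hK k j)

lemma key {m p : ℕ} {G : Matrix (Fin m) (Fin p) F} (hG : StrictlyProper G)
    {K : Matrix (Fin p) (Fin m) F} (hK : ProperM K) :
    IsUnit (1 + G * K).det ∧ ProperM (K * (1 + G * K)⁻¹) := by
  have hS := SP_matmul hG hK
  have hd := det_one_add_SPr hS
  have h1 := one_add_SPr hd
  rw [add_sub_cancel] at h1
  have hP : ProperM (1 + G * K) := fun i j => by
    refine Pr_add ?_ (SPr_pr (hS i j))
    rcases eq_or_ne i j with rfl | hij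
    · simpa [Matrix.one_apply_eq] using Pr_one
    · simpa [Matrix.one_apply_ne hij] using Pr_zero
  exact ⟨isUnit_iff_ne_zero.mpr h1.1,
    ProperM_mul hK (ProperM_inv hP h1.1 h1.2)⟩

lemma neg_SP {m p : ℕ} {G : Matrix (Fin m) (Fin p) F} (hG : StrictlyProper G) :
    StrictlyProper (-G) := fun i j => by
  rcases hG i j with h | h
  · exact Or.inl (by simp [h])
  · exact Or.inr (by simpa [Matrix.neg_apply, RatFunc.intDegree_neg] using h)

lemma one_sub_eq {m p : ℕ} (G : Matrix (Fin m) (Fin p) F) (L : Matrix (Fin p) (Fin m) F) :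
    1 + (-G) * L = 1 - G * L := by rw [Matrix.neg_mul, ← sub_eq_add_neg]


end Rmk4

open Rmk4 in
/-- **Remark 4.** For a strictly proper plant `G`, the feedback transformation
`h_G(K) = K(I+GK)⁻¹` is well defined and proper for every proper `K`, with
`h_G(K)·(I − G·h_G(K))⁻¹ = K`; consequently `K ↦ K(I+GK)⁻¹` is a bijection of the set of
proper matrices onto itself with inverse `L ↦ L(I−GL)⁻¹`. -/
theorem feedback_transformation_invertible (m p : ℕ)
    (G : Matrix (Fin m) (Fin p) F) (hG : StrictlyProper G) :
    (∀ K : Matrix (Fin p) (Fin m) F, ProperM K →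
      IsUnit (1 + G * K).det ∧
      ProperM (K * (1 + G * K)⁻¹) ∧
      IsUnit (1 - G * (K * (1 + G * K)⁻¹)).det ∧
      (K * (1 + G * K)⁻¹) * (1 - G * (K * (1 + G * K)⁻¹))⁻¹ = K) ∧
    Set.BijOn (fun K : Matrix (Fin p) (Fin m) F => K * (1 + G * K)⁻¹)
      {K | ProperM K} {K | ProperM K} ∧
    Set.InvOn (fun L : Matrix (Fin p) (Fin m) F => L * (1 - G * L)⁻¹)
      (fun K : Matrix (Fin p) (Fin m) F => K * (1 + G * K)⁻¹)
      {K | ProperM K} {K | ProperM K} := by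
  have hG' := neg_SP hG
  -- the basic computation: 1 - G * (K * A⁻¹) = A⁻¹ where A = 1 + G * K
  have hcomp : ∀ K : Matrix (Fin p) (Fin m) F, ProperM K →
      1 - G * (K * (1 + G * K)⁻¹) = (1 + G * K)⁻¹ := by
    intro K hK
    have hA := (key hG hK).1
    calc 1 - G * (K * (1 + G * K)⁻¹)
        = (1 + G * K) * (1 + G * K)⁻¹ - (G * K) * (1 + G * K)⁻¹ := by
          rw [Matrix.mul_nonsing_inv _ hA, Matrix.mul_assoc]
      _ = (1 + G * K - G * K) * (1 + G * K)⁻¹ := by rw [Matrix.sub_mul]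
      _ = (1 + G * K)⁻¹ := by rw [add_sub_cancel_right, Matrix.one_mul]
  have part1 : ∀ K : Matrix (Fin p) (Fin m) F, ProperM K →
      IsUnit (1 + G * K).det ∧
      ProperM (K * (1 + G * K)⁻¹) ∧
      IsUnit (1 - G * (K * (1 + G * K)⁻¹)).det ∧
      (K * (1 + G * K)⁻¹) * (1 - G * (K * (1 + G * K)⁻¹))⁻¹ = K := by
    intro K hK
    obtain ⟨hA, hprop⟩ := key hG hK
    refine ⟨hA, hprop, ?_, ?_⟩
    · rw [hcomp K hK]
      exact (Matrix.isUnit_nonsing_inv_det _ hA)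
    · rw [hcomp K hK, Matrix.nonsing_inv_nonsing_inv _ hA, Matrix.mul_assoc,
        Matrix.nonsing_inv_mul _ hA, Matrix.mul_one]
  -- the inverse map computation
  have hcomp' : ∀ L : Matrix (Fin p) (Fin m) F, ProperM L →
      1 + G * (L * (1 - G * L)⁻¹) = (1 - G * L)⁻¹ := by
    intro L hL
    have hB : IsUnit (1 - G * L).det := by
      rw [← one_sub_eq]; exact (key hG' hL).1
    calc 1 + G * (L * (1 - G * L)⁻¹)
        = (1 - G * L) * (1 - G * L)⁻¹ + (G * L) * (1 - G * L)⁻¹ := by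
          rw [Matrix.mul_nonsing_inv _ hB, Matrix.mul_assoc]
      _ = (1 - G * L + G * L) * (1 - G * L)⁻¹ := by rw [Matrix.add_mul]
      _ = (1 - G * L)⁻¹ := by rw [sub_add_cancel, Matrix.one_mul]
  have mapsTo_g : Set.MapsTo (fun K : Matrix (Fin p) (Fin m) F => K * (1 + G * K)⁻¹)
      {K | ProperM K} {K | ProperM K} := fun K hK => (key hG hK).2
  have mapsTo_f : Set.MapsTo (fun L : Matrix (Fin p) (Fin m) F => L * (1 - G * L)⁻¹)
      {K | ProperM K} {K | ProperM K} := by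
    intro L hL
    have := (key hG' hL).2
    rwa [one_sub_eq] at this
  have hleft : Set.LeftInvOn (fun L : Matrix (Fin p) (Fin m) F => L * (1 - G * L)⁻¹)
      (fun K : Matrix (Fin p) (Fin m) F => K * (1 + G * K)⁻¹) {K | ProperM K} :=
    fun K hK => (part1 K hK).2.2.2
  have hright : Set.RightInvOn (fun L : Matrix (Fin p) (Fin m) F => L * (1 - G * L)⁻¹)
      (fun K : Matrix (Fin p) (Fin m) F => K * (1 + G * K)⁻¹) {K | ProperM K} := by
    intro L hL
    have hB : IsUnit (1 - G * L).det := by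
      rw [← one_sub_eq]; exact (key hG' hL).1
    show L * (1 - G * L)⁻¹ * (1 + G * (L * (1 - G * L)⁻¹))⁻¹ = L
    rw [hcomp' L hL, Matrix.nonsing_inv_nonsing_inv _ hB, Matrix.mul_assoc,
      Matrix.nonsing_inv_mul _ hB, Matrix.mul_one]
  have hinv : Set.InvOn (fun L : Matrix (Fin p) (Fin m) F => L * (1 - G * L)⁻¹)
      (fun K : Matrix (Fin p) (Fin m) F => K * (1 + G * K)⁻¹)
      {K | ProperM K} {K | ProperM K} := ⟨hleft, hright⟩
  exact ⟨part1, hinv.bijOn mapsTo_g mapsTo_f, hinv⟩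
end
end

section
/- (Theorem 2, Rotkowitz–Lall.) Let G ∈ F^{m×p} be strictly proper, let K^bin : Fin p → Fin m → Bool define the sparsity subspace S, and let S_prop denote the set of proper matrices belonging to S. Then S is quadratically invariant under G (i.e. K·G·K ∈ S for every K ∈ S) if and only if { K·(I + G·K)⁻¹ : K ∈ S_prop } = S_prop (note that I + G·K is invertible over F for every proper K, since G is strictly proper). -/
open Matrix

noncomputable section

set_option maxHeartbeats 2000000
set_option synthInstance.maxHeartbeats 200000

section RLHelpers

open Polynomial

instance : CharZero F := charZero_of_injective_algebraMap (algebraMap ℝ F).injective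

/-- proper scalar -/
def Pr (f : F) : Prop := f.intDegree ≤ 0
/-- strictly proper scalar -/
def Sp (f : F) : Prop := f = 0 ∨ f.intDegree < 0

lemma Sp.pr {f : F} (h : Sp f) : Pr f := by
  rcases h with h | h
  · simp [Pr, h]
  · exact le_of_lt h

lemma pr_zero : Pr (0 : F) := by simp [Pr]
lemma pr_one : Pr (1 : F) := by simp [Pr]
lemma sp_zero : Sp (0 : F) := Or.inl rfl
lemma pr_neg {f : F} (h : Pr f) : Pr (-f) := by simpa [Pr] using h
lemma sp_neg {f : F} (h : Sp f) : Sp (-f) := by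
  rcases h with h | h
  · simp [h, sp_zero]
  · exact Or.inr (by simpa using h)

lemma pr_mul {f g : F} (hf : Pr f) (hg : Pr g) : Pr (f * g) := by
  by_cases h1 : f = 0
  · simp [h1, pr_zero]
  by_cases h2 : g = 0
  · simp [h2, pr_zero]
  · unfold Pr at *
    rw [RatFunc.intDegree_mul h1 h2]
    omega

lemma sp_mul_pr {f g : F} (hf : Sp f) (hg : Pr g) : Sp (f * g) := by
  by_cases h1 : f = 0
  · simp [h1, sp_zero]
  by_cases h2 : g = 0
  · simp [h2, sp_zero]
  rcases hf with h | h
  · simp [h, sp_zero]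
  · refine Or.inr ?_
    rw [RatFunc.intDegree_mul h1 h2]
    unfold Pr at hg
    omega

lemma pr_mul_sp {f g : F} (hf : Pr f) (hg : Sp g) : Sp (f * g) := by
  rw [mul_comm]; exact sp_mul_pr hg hf

lemma pr_add {f g : F} (hf : Pr f) (hg : Pr g) : Pr (f + g) := by
  by_cases h2 : g = 0
  · simpa [h2] using hf
  by_cases h3 : f + g = 0
  · simp [Pr, h3]
  · exact le_trans (RatFunc.intDegree_add_le h2 h3) (by simp [Pr] at hf hg; omega)

lemma sp_add {f g : F} (hf : Sp f) (hg : Sp g) : Sp (f + g) := by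
  by_cases h2 : g = 0
  · simpa [h2] using hf
  by_cases h3 : f + g = 0
  · simp [h3, sp_zero]
  rcases hf with h | h
  · simpa [h] using hg
  rcases hg with h' | h'
  · exact absurd h' h2
  · refine Or.inr (lt_of_le_of_lt (RatFunc.intDegree_add_le h2 h3) ?_)
    exact max_lt h h'

lemma pr_sum {α : Type*} (s : Finset α) (f : α → F) (h : ∀ a ∈ s, Pr (f a)) :
    Pr (∑ a ∈ s, f a) := by
  classical
  induction s using Finset.induction_on with
  | empty => simpa using pr_zero
  | insert _ _ hx ih =>
    rename_i a s
    rw [Finset.sum_insert hx]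
    exact pr_add (h a (by simp)) (ih fun b hb => h b (by simp [hb]))

lemma sp_sum {α : Type*} (s : Finset α) (f : α → F) (h : ∀ a ∈ s, Sp (f a)) :
    Sp (∑ a ∈ s, f a) := by
  classical
  induction s using Finset.induction_on with
  | empty => simpa using sp_zero
  | insert _ _ hx ih =>
    rename_i a s
    rw [Finset.sum_insert hx]
    exact sp_add (h a (by simp)) (ih fun b hb => h b (by simp [hb]))

lemma pr_prod {α : Type*} (s : Finset α) (f : α → F) (h : ∀ a ∈ s, Pr (f a)) :
    Pr (∏ a ∈ s, f a) := by
  classical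
  induction s using Finset.induction_on with
  | empty => simpa using pr_one
  | insert _ _ hx ih =>
    rename_i a s
    rw [Finset.prod_insert hx]
    exact pr_mul (h a (by simp)) (ih fun b hb => h b (by simp [hb]))

lemma sp_ne_neg_one {f : F} (h : Sp f) : 1 + f ≠ 0 := by
  intro hc
  have hf : f = -1 := by linear_combination hc
  rcases h with h | h
  · rw [h] at hf; exact absurd hf (by norm_num)
  · rw [hf] at h; simp at h

lemma pr_one_add_sp {f : F} (h : Sp f) : Pr (1 + f) := pr_add pr_one h.pr

lemma intDegree_one_add_sp {f : F} (h : Sp f) : (1 + f).intDegree = 0 := by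
  rcases h with h | h
  · simp [h]
  have hne : (1 : F) + f ≠ 0 := sp_ne_neg_one (Or.inr h)
  have hle : (1 + f).intDegree ≤ 0 := pr_one_add_sp (Or.inr h)
  by_contra hne0
  have hlt : (1 + f).intDegree < 0 := lt_of_le_of_ne hle hne0
  have h1 : (1 : F).intDegree ≤ max ((1 + f).intDegree) ((-f).intDegree) := by
    have := RatFunc.intDegree_add_le (x := 1 + f) (y := -f) ?hy ?hxy
    · rw [add_comm] at this; simpa using this
    case hy => intro hc; rw [neg_eq_zero] at hc; rw [hc] at h; simp at h
    case hxy => simp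
  rw [RatFunc.intDegree_one, RatFunc.intDegree_neg] at h1
  omega

lemma pr_inv_one_add_sp {f : F} (h : Sp f) : Pr (1 + f)⁻¹ := by
  have hne := sp_ne_neg_one h
  have := RatFunc.intDegree_mul hne (inv_ne_zero hne)
  rw [mul_inv_cancel₀ hne, RatFunc.intDegree_one, intDegree_one_add_sp h] at this
  unfold Pr; omega

lemma pr_algebraMap (c : ℝ) : Pr (algebraMap ℝ F c) := by
  unfold Pr
  rcases eq_or_ne c 0 with h | h
  · simp [h]
  · have : algebraMap ℝ F c = RatFunc.C c := rfl
    rw [this, RatFunc.intDegree_C]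

lemma pr_zsmul_units (ε : ℤˣ) {f : F} (h : Pr f) : Pr (ε • f) := by
  rcases Int.units_eq_one_or ε with h1 | h1 <;> simp [h1, Units.smul_def]
  · exact h
  · exact pr_neg h

lemma sp_zsmul_units (ε : ℤˣ) {f : F} (h : Sp f) : Sp (ε • f) := by
  rcases Int.units_eq_one_or ε with h1 | h1 <;> simp [h1, Units.smul_def]
  · exact h
  · exact sp_neg h

lemma sp_prod_one_add_sub_one {α : Type} (s : Finset α) (f : α → F)
    (h : ∀ a ∈ s, Sp (f a)) : Sp ((∏ a ∈ s, (1 + f a)) - 1) := by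
  classical
  induction s using Finset.induction_on with
  | empty => simpa using sp_zero
  | insert _ _ hx ih =>
    rename_i a s
    rw [Finset.prod_insert hx]
    have key : (1 + f a) * (∏ x ∈ s, (1 + f x)) - 1
        = (1 + f a) * ((∏ x ∈ s, (1 + f x)) - 1) + f a := by ring
    rw [key]
    exact sp_add (pr_mul_sp (pr_one_add_sp (h a (by simp)))
      (ih fun b hb => h b (by simp [hb]))) (h a (by simp))

section Det
variable {n : ℕ}

lemma pr_entries_one_add {A : Matrix (Fin n) (Fin n) F} (hA : StrictlyProper A) :
    ∀ i j, Pr ((1 + A) i j) := by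
  intro i j
  rcases eq_or_ne i j with rfl | hij
  · simpa [Matrix.add_apply, Matrix.one_apply_eq] using pr_one_add_sp (hA i i)
  · simpa [Matrix.add_apply, Matrix.one_apply_ne hij] using Sp.pr (hA i j)

lemma sp_det_one_add_sub_one {A : Matrix (Fin n) (Fin n) F} (hA : StrictlyProper A) :
    Sp ((1 + A).det - 1) := by
  classical
  rw [Matrix.det_apply]
  rw [← Finset.add_sum_erase _ _ (Finset.mem_univ (1 : Equiv.Perm (Fin n)))]
  have h1 : (Equiv.Perm.sign (1 : Equiv.Perm (Fin n))) •
      (∏ i, (1 + A) ((1 : Equiv.Perm (Fin n)) i) i) = ∏ i, (1 + A i i) := by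
    simp [Equiv.Perm.one_apply, Matrix.add_apply, Matrix.one_apply_eq]
  rw [h1]
  have key : (∏ i, (1 + A i i)) +
      (∑ σ ∈ Finset.univ.erase (1 : Equiv.Perm (Fin n)),
        (Equiv.Perm.sign σ) • ∏ i, (1 + A) (σ i) i) - 1
      = ((∏ i, (1 + A i i)) - 1) +
      (∑ σ ∈ Finset.univ.erase (1 : Equiv.Perm (Fin n)),
        (Equiv.Perm.sign σ) • ∏ i, (1 + A) (σ i) i) := by ring
  rw [key]
  refine sp_add (sp_prod_one_add_sub_one _ _ fun i _ => hA i i) (sp_sum _ _ ?_)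
  intro σ hσ
  have hσ1 : σ ≠ 1 := (Finset.mem_erase.mp hσ).1
  have : ∃ i, σ i ≠ i := by
    by_contra hc
    push_neg at hc
    exact hσ1 (Equiv.ext hc)
  obtain ⟨i0, hi0⟩ := this
  refine sp_zsmul_units _ ?_
  rw [← Finset.mul_prod_erase _ _ (Finset.mem_univ i0)]
  have hfac : (1 + A) (σ i0) i0 = A (σ i0) i0 := by
    simp [Matrix.add_apply, Matrix.one_apply_ne hi0]
  rw [hfac]
  exact sp_mul_pr (hA _ _) (pr_prod _ _ fun b _ => pr_entries_one_add hA _ _)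

lemma isUnit_det_one_add {A : Matrix (Fin n) (Fin n) F} (hA : StrictlyProper A) :
    IsUnit (1 + A).det := by
  rw [isUnit_iff_ne_zero]
  have h := sp_ne_neg_one (sp_det_one_add_sub_one hA)
  intro hc
  rw [hc] at h
  simp at h

lemma pr_det {M : Matrix (Fin n) (Fin n) F} (hM : ∀ i j, Pr (M i j)) : Pr M.det := by
  rw [Matrix.det_apply]
  exact pr_sum _ _ fun σ _ => pr_zsmul_units _ (pr_prod _ _ fun i _ => hM _ _)

lemma pr_adjugate {M : Matrix (Fin n) (Fin n) F} (hM : ∀ i j, Pr (M i j)) :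
    ∀ i j, Pr (M.adjugate i j) := by
  intro i j
  rw [Matrix.adjugate_apply]
  refine pr_det fun a b => ?_
  rw [Matrix.updateRow_apply]
  split_ifs with h
  · rcases eq_or_ne i b with rfl | hib
    · simpa [Pi.single_eq_same] using pr_one
    · simp [Pi.single_eq_of_ne' hib, pr_zero]
  · exact hM a b

lemma pr_inv_one_add {A : Matrix (Fin n) (Fin n) F} (hA : StrictlyProper A) :
    ∀ i j, Pr ((1 + A)⁻¹ i j) := by
  intro i j
  rw [Matrix.inv_def]
  have hdet : (1 + A).det = 1 + ((1 + A).det - 1) := by ring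
  have hinv : Ring.inverse (1 + A).det = ((1 + A).det)⁻¹ := Ring.inverse_eq_inv _
  simp only [Matrix.smul_apply, hinv, smul_eq_mul]
  refine pr_mul ?_ (pr_adjugate (pr_entries_one_add hA) i j)
  rw [hdet]
  exact pr_inv_one_add_sp (sp_det_one_add_sub_one hA)

end Det

/-- sparsity pattern membership -/
def SPat {a b : Type} (Kbin : a → b → Bool) (K : Matrix a b F) : Prop :=
  ∀ i j, Kbin i j = false → K i j = 0

/-- the pointwise quadratic-invariance condition -/
def QIpat {m p : ℕ} (G : Matrix (Fin m) (Fin p) F) (Kbin : Fin p → Fin m → Bool) : Prop :=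
  ∀ i j k l, Kbin i j = false → Kbin i k = true → Kbin l j = true → G k l = 0

variable {m p : ℕ}

lemma sp_matmul {G : Matrix (Fin m) (Fin p) F} {K : Matrix (Fin p) (Fin m) F}
    (hG : StrictlyProper G) (hK : ProperM K) : StrictlyProper (G * K) := by
  intro i j
  show Sp ((G * K) i j)
  rw [Matrix.mul_apply]
  exact sp_sum _ _ fun k _ => sp_mul_pr (hG i k) (hK k j)

lemma pow_pattern {G : Matrix (Fin m) (Fin p) F} {Kbin : Fin p → Fin m → Bool}
    (hq : QIpat G Kbin) {K : Matrix (Fin p) (Fin m) F} (hK : SPat Kbin K) :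
    ∀ N : ℕ, SPat Kbin (K * (G * K) ^ N) := by
  intro N
  induction N with
  | zero => simpa [pow_zero, Matrix.mul_one] using hK
  | succ N ih =>
    have key : K * (G * K) ^ (N + 1) = (K * G) * (K * (G * K) ^ N) := by
      rw [pow_succ', ← Matrix.mul_assoc K (G * K) ((G * K) ^ N),
        ← Matrix.mul_assoc K G K, Matrix.mul_assoc (K * G) K ((G * K) ^ N)]
    rw [key]
    intro i j hbad
    rw [Matrix.mul_apply]
    refine Finset.sum_eq_zero fun l _ => ?_
    rcases hlj : Kbin l j with _ | _
    · rw [ih l j hlj, mul_zero]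
    · have : (K * G) i l = 0 := by
        rw [Matrix.mul_apply]
        refine Finset.sum_eq_zero fun k _ => ?_
        rcases hik : Kbin i k with _ | _
        · rw [hK i k hik, zero_mul]
        · rw [hq i j k l hbad hik hlj, mul_zero]
      rw [this, zero_mul]

lemma qipat_implies {G : Matrix (Fin m) (Fin p) F} {Kbin : Fin p → Fin m → Bool}
    (hq : QIpat G Kbin) {K : Matrix (Fin p) (Fin m) F} (hK : SPat Kbin K) :
    ∀ i j, Kbin i j = false → (K * G * K) i j = 0 := by
  intro i j hbad
  rw [Matrix.mul_apply]
  refine Finset.sum_eq_zero fun l _ => ?_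
  rcases hlj : Kbin l j with _ | _
  · rw [hK l j hlj, mul_zero]
  · have : (K * G) i l = 0 := by
      rw [Matrix.mul_apply]
      refine Finset.sum_eq_zero fun k _ => ?_
      rcases hik : Kbin i k with _ | _
      · rw [hK i k hik, zero_mul]
      · rw [hq i j k l hbad hik hlj, mul_zero]
    rw [this, zero_mul]

/-- inverse of `1 + A` as a polynomial in `A` -/
lemma inv_one_add_eq_aeval {n : ℕ} (A : Matrix (Fin n) (Fin n) F)
    (h : IsUnit (1 + A).det) :
    ∃ r : Polynomial F, (1 + A)⁻¹ = Polynomial.aeval A r := by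
  set B := 1 + A with hB
  set c0 := B.charpoly.coeff 0 with hc0
  have hdet : B.det = (-1) ^ Fintype.card (Fin n) * c0 := Matrix.det_eq_sign_charpoly_coeff B
  have hc0ne : c0 ≠ 0 := by
    intro hc
    rw [hc, mul_zero] at hdet
    exact isUnit_iff_ne_zero.mp h hdet
  have h0 : Polynomial.aeval B B.charpoly = 0 := Matrix.aeval_self_charpoly B
  have hp : Polynomial.X * B.charpoly.divX + Polynomial.C c0 = B.charpoly :=
    Polynomial.X_mul_divX_add _
  rw [← hp] at h0
  rw [map_add, _root_.map_mul, Polynomial.aeval_X, Polynomial.aeval_C,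
    Algebra.algebraMap_eq_smul_one] at h0
  have hBq : B * Polynomial.aeval B B.charpoly.divX = -(c0 • 1) :=
    eq_neg_of_add_eq_zero_left h0
  refine ⟨(-c0)⁻¹ • (B.charpoly.divX.comp (Polynomial.X + 1)), ?_⟩
  have hXB : Polynomial.aeval A ((Polynomial.X : Polynomial F) + 1) = B := by
    rw [map_add, Polynomial.aeval_X, _root_.map_one, hB, add_comm]
  have haev : Polynomial.aeval A (B.charpoly.divX.comp (Polynomial.X + 1)) =
      Polynomial.aeval B B.charpoly.divX := by
    rw [Polynomial.aeval_comp, hXB]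
  rw [_root_.map_smul, haev]
  apply Matrix.inv_eq_right_inv
  rw [Matrix.mul_smul, hBq, smul_neg, smul_smul]
  have hone : (-c0)⁻¹ * c0 = -1 := by field_simp
  rw [hone, neg_smul, neg_neg, one_smul]

lemma pattern_feedback {G : Matrix (Fin m) (Fin p) F} (hG : StrictlyProper G)
    {Kbin : Fin p → Fin m → Bool} (hq : QIpat G Kbin) {K : Matrix (Fin p) (Fin m) F}
    (hK : SPat Kbin K) (hKp : ProperM K) : SPat Kbin (K * (1 + G * K)⁻¹) := by
  have hA : StrictlyProper (G * K) := sp_matmul hG hKp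
  obtain ⟨r, hr⟩ := inv_one_add_eq_aeval (G * K) (isUnit_det_one_add hA)
  intro i j hbad
  rw [hr, Polynomial.aeval_eq_sum_range, Matrix.mul_sum, Matrix.sum_apply]
  refine Finset.sum_eq_zero fun N _ => ?_
  rw [Matrix.mul_smul]
  rw [Matrix.smul_apply]
  rw [pow_pattern hq hK N i j hbad]
  rw [smul_zero]

lemma proper_feedback {G : Matrix (Fin m) (Fin p) F} (hG : StrictlyProper G)
    {K : Matrix (Fin p) (Fin m) F} (hKp : ProperM K) : ProperM (K * (1 + G * K)⁻¹) := by
  have hA : StrictlyProper (G * K) := sp_matmul hG hKp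
  intro i j
  have key : Pr (((K * (1 + G * K)⁻¹ : Matrix (Fin p) (Fin m) F)) i j) := by
    rw [Matrix.mul_apply]
    exact pr_sum _ _ fun l _ => pr_mul (hKp i l) (pr_inv_one_add hA l j)
  exact key

/-- algebra for surjectivity: preimage of `T` under the feedback map -/
lemma feedback_surj_eq {G : Matrix (Fin m) (Fin p) F} {T : Matrix (Fin p) (Fin m) F}
    (h1 : IsUnit (1 - G * T).det) :
    (T * (1 - G * T)⁻¹) * (1 + G * (T * (1 - G * T)⁻¹))⁻¹ = T := by
  set W := 1 - G * T with hW
  have hGK : G * (T * W⁻¹) = (G * T) * W⁻¹ := (Matrix.mul_assoc _ _ _).symm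
  have h2 : 1 + G * (T * W⁻¹) = W⁻¹ := by
    rw [hGK, ← Matrix.mul_nonsing_inv W h1, ← Matrix.add_mul]
    have : W + G * T = 1 := by rw [hW]; abel
    rw [this, Matrix.one_mul]
  rw [h2, Matrix.nonsing_inv_nonsing_inv W h1, Matrix.mul_assoc,
    Matrix.nonsing_inv_mul W h1, Matrix.mul_one]

lemma std_mul_apply {a b c : Type} [DecidableEq a] [DecidableEq b] [Fintype b]
    (i : a) (k : b) (x : F) (M : Matrix b c F) (r : a) (s : c) :
    (Matrix.single i k x * M) r s = if r = i then x * M k s else 0 := by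
  rw [Matrix.mul_apply]
  rcases eq_or_ne r i with rfl | hri
  · simp [Matrix.single, ite_and, Finset.sum_ite_eq]
  · simp [Matrix.single, ite_and, Ne.symm hri, hri]

lemma mul_std_apply {a b c : Type} [DecidableEq b] [DecidableEq c] [Fintype b]
    (M : Matrix a b F) (l : b) (j : c) (x : F) (r : a) (s : c) :
    (M * Matrix.single l j x) r s = if s = j then M r l * x else 0 := by
  rw [Matrix.mul_apply]
  rcases eq_or_ne s j with rfl | hsj
  · simp [Matrix.single, ite_and, Finset.sum_ite_eq]
  · simp [Matrix.single, ite_and, Ne.symm hsj, hsj]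

lemma qipat_of_proper {G : Matrix (Fin m) (Fin p) F} {Kbin : Fin p → Fin m → Bool}
    (h2 : ∀ K : Matrix (Fin p) (Fin m) F, SPat Kbin K → ProperM K →
      ∀ i j, Kbin i j = false → (K * G * K) i j = 0) : QIpat G Kbin := by
  intro i j k l hbad hik hlj
  set P : F → Matrix (Fin p) (Fin m) F := fun x => Matrix.single i k x with hP
  set Q : F → Matrix (Fin p) (Fin m) F := fun y => Matrix.single l j y with hQ
  have hpat : ∀ x y : F, SPat Kbin (P x + Q y) := by
    intro x y r s hrs
    have h1 : P x r s = 0 := by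
      apply Matrix.single_apply_of_ne
      rintro ⟨rfl, rfl⟩
      rw [hik] at hrs; exact Bool.noConfusion hrs
    have h1' : Q y r s = 0 := by
      apply Matrix.single_apply_of_ne
      rintro ⟨rfl, rfl⟩
      rw [hlj] at hrs; exact Bool.noConfusion hrs
    rw [Matrix.add_apply, h1, h1', add_zero]
  have hprop : ∀ x y : F, Pr x → Pr y → ProperM (P x + Q y) := by
    intro x y hx hy r s
    have key : Pr ((P x + Q y) r s) := by
      rw [Matrix.add_apply]
      refine pr_add ?_ ?_
      · rw [hP]; simp only [Matrix.single, Matrix.of_apply]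
        split_ifs
        · exact hx
        · exact pr_zero
      · rw [hQ]; simp only [Matrix.single, Matrix.of_apply]
        split_ifs
        · exact hy
        · exact pr_zero
    exact key
  have comp : ∀ x y : F, ((P x + Q y) * G * (P x + Q y)) i j
      = ((if j = k then (x * G k i) * x else 0)
      + (x * G k l) * y)
      + ((if j = k then (if i = l then y * G j i else 0) * x else 0)
      + (if i = l then y * G j l else 0) * y) := by
    intro x y
    have hsplit : (P x + Q y) * G * (P x + Q y)
        = ((P x * G) * P x + (P x * G) * Q y) + ((Q y * G) * P x + (Q y * G) * Q y) := by
      rw [Matrix.add_mul, Matrix.add_mul, Matrix.mul_add, Matrix.mul_add]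
    rw [hsplit, Matrix.add_apply, Matrix.add_apply, Matrix.add_apply]
    congr 1
    · congr 1
      · rw [hP, mul_std_apply]
        rcases eq_or_ne j k with rfl | hjk
        · rw [if_pos rfl, if_pos rfl, std_mul_apply, if_pos rfl]
        · rw [if_neg hjk, if_neg hjk]
      · rw [hP, hQ, mul_std_apply, if_pos rfl, std_mul_apply, if_pos rfl]
    · congr 1
      · rw [hP, hQ, mul_std_apply]
        rcases eq_or_ne j k with rfl | hjk
        · rw [if_pos rfl, if_pos rfl, std_mul_apply]
        · rw [if_neg hjk, if_neg hjk]
      · rw [hQ, mul_std_apply, if_pos rfl, std_mul_apply]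
  have e1 := h2 _ (hpat 1 1) (hprop 1 1 pr_one pr_one) i j hbad
  have e2 := h2 _ (hpat 1 (-1)) (hprop 1 (-1) pr_one (pr_neg pr_one)) i j hbad
  rw [comp 1 1] at e1
  rw [comp 1 (-1)] at e2
  have simpset := 0
  clear simpset
  rcases eq_or_ne j k with rfl | hjk <;> rcases eq_or_ne i l with rfl | hil
  · simp only [if_pos rfl, eq_self_iff_true, if_true, ite_true, one_mul, mul_one, neg_mul, mul_neg, neg_neg] at e1 e2
    have h4 : (4 : F) * G j i = 0 := by linear_combination e1
    exact (mul_eq_zero.mp h4).resolve_left (by norm_num)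
  · simp only [if_pos rfl, eq_self_iff_true, if_true, ite_true, if_neg hil, one_mul, mul_one, neg_mul, mul_neg, neg_neg,
      zero_mul, mul_zero, add_zero, zero_add, neg_zero] at e1 e2
    have h4 : (2 : F) * G j l = 0 := by linear_combination e1 - e2
    exact (mul_eq_zero.mp h4).resolve_left (by norm_num)
  · simp only [if_pos rfl, eq_self_iff_true, if_true, ite_true, if_neg hjk, one_mul, mul_one, neg_mul, mul_neg, neg_neg,
      zero_mul, mul_zero, add_zero, zero_add, neg_zero] at e1 e2
    have h4 : (2 : F) * G k i = 0 := by linear_combination e1 - e2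
    exact (mul_eq_zero.mp h4).resolve_left (by norm_num)
  · simp only [if_neg hjk, if_neg hil, eq_self_iff_true, if_true, ite_true, one_mul, mul_one, neg_mul, mul_neg, neg_neg,
      zero_mul, mul_zero, add_zero, zero_add, neg_zero] at e1 e2
    have h4 : (2 : F) * G k l = 0 := by linear_combination e1 - e2
    exact (mul_eq_zero.mp h4).resolve_left (by norm_num)

lemma feedback_closed_implies_qi {G : Matrix (Fin m) (Fin p) F} (hG : StrictlyProper G)
    {Kbin : Fin p → Fin m → Bool}
    (hcl : ∀ K : Matrix (Fin p) (Fin m) F, SPat Kbin K → ProperM K →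
      SPat Kbin (K * (1 + G * K)⁻¹))
    {K : Matrix (Fin p) (Fin m) F} (hK : SPat Kbin K) (hKp : ProperM K) :
    ∀ i j, Kbin i j = false → (K * G * K) i j = 0 := by
  intro i j hbad
  set A : Matrix (Fin m) (Fin m) F := G * K with hA
  set Ap : Matrix (Fin m) (Fin m) (Polynomial F) := A.map Polynomial.C with hAp
  set Kp : Matrix (Fin p) (Fin m) (Polynomial F) := K.map Polynomial.C with hKp'
  set Bp : Matrix (Fin m) (Fin m) (Polynomial F) :=
    1 + (Polynomial.X : Polynomial F) • Ap with hBp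
  -- evaluation of Bp
  have hmapB : ∀ t : F, Bp.map (Polynomial.evalRingHom t) = 1 + t • A := by
    intro t
    ext a b
    rw [Matrix.map_apply, hBp, Matrix.add_apply, Matrix.add_apply, map_add,
      Matrix.smul_apply, Matrix.smul_apply, hAp, Matrix.map_apply]
    rcases eq_or_ne a b with rfl | hab
    · rw [Matrix.one_apply_eq, Matrix.one_apply_eq]
      simp only [smul_eq_mul, Polynomial.coe_evalRingHom, Polynomial.eval_add,
        Polynomial.eval_one, Polynomial.eval_mul, Polynomial.eval_X, Polynomial.eval_C]
    · rw [Matrix.one_apply_ne hab, Matrix.one_apply_ne hab]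
      simp only [smul_eq_mul, Polynomial.coe_evalRingHom, Polynomial.eval_add,
        Polynomial.eval_zero, Polynomial.eval_mul, Polynomial.eval_X, Polynomial.eval_C]
  -- the entry polynomial vanishes at all real points
  have hroot : ∀ c : ℝ, c ≠ 0 →
      Polynomial.eval (algebraMap ℝ F c) ((Kp * Bp.adjugate) i j) = 0 := by
    intro c hc
    set t : F := algebraMap ℝ F c with ht'
    have ht : t ≠ 0 := by
      rw [ht']
      exact (map_ne_zero (algebraMap ℝ F)).mpr hc
    have hsA : StrictlyProper (t • A) := by
      intro a b
      have key : Sp ((t • A : Matrix (Fin m) (Fin m) F) a b) := by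
        rw [Matrix.smul_apply, smul_eq_mul]
        exact pr_mul_sp (pr_algebraMap c) (sp_matmul hG hKp a b)
      exact key
    have hdetU : IsUnit (1 + t • A).det := isUnit_det_one_add hsA
    have hKc : SPat Kbin (t • K) := by
      intro r s h
      rw [Matrix.smul_apply, hK r s h, smul_zero]
    have hKcp : ProperM (t • K) := by
      intro r s
      have key : Pr ((t • K : Matrix (Fin p) (Fin m) F) r s) := by
        rw [Matrix.smul_apply, smul_eq_mul]
        exact pr_mul (pr_algebraMap c) (hKp r s)
      exact key
    have h5 := hcl (t • K) hKc hKcp i j hbad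
    have hGtK : G * (t • K) = t • A := by rw [Matrix.mul_smul, hA]
    rw [hGtK, Matrix.smul_mul, Matrix.smul_apply, smul_eq_mul] at h5
    have h6 : (K * (1 + t • A)⁻¹) i j = 0 := (mul_eq_zero.mp h5).resolve_left ht
    have hadj : (1 + t • A).adjugate = (1 + t • A).det • (1 + t • A)⁻¹ := by
      rw [Matrix.inv_def, smul_smul, Ring.mul_inverse_cancel _ hdetU, one_smul]
    have h7 : (K * (1 + t • A).adjugate) i j = 0 := by
      rw [hadj, Matrix.mul_smul, Matrix.smul_apply, h6, smul_zero]
    have h8 : (Kp * Bp.adjugate).map (Polynomial.evalRingHom t)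
        = K * (1 + t • A).adjugate := by
      rw [Matrix.map_mul]
      congr 1
      · ext r s
        rw [Matrix.map_apply, hKp', Matrix.map_apply]
        simp
      · rw [← RingHom.mapMatrix_apply, RingHom.map_adjugate, RingHom.mapMatrix_apply,
          hmapB t]
    calc Polynomial.eval t ((Kp * Bp.adjugate) i j)
        = ((Kp * Bp.adjugate).map (Polynomial.evalRingHom t)) i j := by
          rw [Matrix.map_apply, Polynomial.coe_evalRingHom]
      _ = (K * (1 + t • A).adjugate) i j := by rw [h8]
      _ = 0 := h7
  -- hence the polynomial is zero
  have hNzero : (Kp * Bp.adjugate) i j = 0 := by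
    apply Polynomial.eq_zero_of_infinite_isRoot
    apply Set.infinite_of_injective_forall_mem
      (f := fun n : ℕ => algebraMap ℝ F ((n : ℝ) + 1))
    case hi =>
      intro a b hab
      have := (algebraMap ℝ F).injective hab
      have : (a : ℝ) = b := by linarith
      exact_mod_cast this
    case hf =>
      intro n
      show Polynomial.IsRoot _ _
      exact hroot ((n : ℝ) + 1) (by positivity)
  -- polynomial algebra
  have hCp : Bp.adjugate = Bp.det • (1 : Matrix (Fin m) (Fin m) (Polynomial F))
      - (Polynomial.X : Polynomial F) • (Ap * Bp.adjugate) := by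
    have h9 : Bp.adjugate + (Polynomial.X : Polynomial F) • (Ap * Bp.adjugate)
        = Bp.det • (1 : Matrix (Fin m) (Fin m) (Polynomial F)) := by
      calc Bp.adjugate + (Polynomial.X : Polynomial F) • (Ap * Bp.adjugate)
          = (1 + (Polynomial.X : Polynomial F) • Ap) * Bp.adjugate := by
            rw [Matrix.add_mul, Matrix.one_mul, Matrix.smul_mul]
        _ = Bp * Bp.adjugate := by rw [← hBp]
        _ = Bp.det • 1 := Matrix.mul_adjugate Bp
    exact eq_sub_of_add_eq h9
  have hKpij : Kp i j = 0 := by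
    rw [hKp', Matrix.map_apply, hK i j hbad, map_zero]
  have hstep1 : (Kp * (Ap * Bp.adjugate)) i j = 0 := by
    have e : (Kp * Bp.adjugate) i j = Bp.det * Kp i j
        - Polynomial.X * (Kp * (Ap * Bp.adjugate)) i j := by
      conv_lhs => rw [hCp]
      rw [Matrix.mul_sub, Matrix.mul_smul, Matrix.mul_smul, Matrix.mul_one,
        Matrix.sub_apply, Matrix.smul_apply, Matrix.smul_apply, smul_eq_mul, smul_eq_mul]
    rw [hNzero, hKpij, mul_zero, zero_sub] at e
    have hXz : Polynomial.X * (Kp * (Ap * Bp.adjugate)) i j = 0 := by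
      have := e.symm
      rwa [neg_eq_zero] at this
    exact (mul_eq_zero.mp hXz).resolve_left Polynomial.X_ne_zero
  have hstep2 : Bp.det * ((Kp * Ap) i j)
      = Polynomial.X * (((Kp * Ap) * (Ap * Bp.adjugate)) i j) := by
    have hassoc : Kp * (Ap * Bp.adjugate) = (Kp * Ap) * Bp.adjugate :=
      (Matrix.mul_assoc _ _ _).symm
    have e : ((Kp * Ap) * Bp.adjugate) i j = Bp.det * (Kp * Ap) i j
        - Polynomial.X * (((Kp * Ap) * (Ap * Bp.adjugate)) i j) := by
      conv_lhs => rw [hCp]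
      rw [Matrix.mul_sub, Matrix.mul_smul, Matrix.mul_smul, Matrix.mul_one,
        Matrix.sub_apply, Matrix.smul_apply, Matrix.smul_apply, smul_eq_mul, smul_eq_mul]
    rw [← hassoc, hstep1] at e
    linear_combination -e
  -- evaluate at 0
  have hdet0 : Polynomial.eval 0 Bp.det = 1 := by
    have h1 : Polynomial.evalRingHom (0 : F) Bp.det
        = (Bp.map (Polynomial.evalRingHom (0 : F))).det := by
      rw [RingHom.map_det, RingHom.mapMatrix_apply]
    rw [← Polynomial.coe_evalRingHom, h1, hmapB 0, zero_smul, add_zero, Matrix.det_one]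
  have hKA0 : Polynomial.eval 0 ((Kp * Ap) i j) = (K * A) i j := by
    have hmm : Kp * Ap = (K * A).map Polynomial.C := by
      rw [hKp', hAp, ← Matrix.map_mul]
    rw [hmm, Matrix.map_apply]
    simp
  have hfin := congrArg (Polynomial.eval 0) hstep2
  rw [Polynomial.eval_mul, Polynomial.eval_mul, hdet0, hKA0, one_mul,
    Polynomial.eval_X, zero_mul] at hfin
  rw [Matrix.mul_assoc, ← hA]
  exact hfin


end RLHelpers

/-- **Theorem 2 (Rotkowitz–Lall).** For a strictly proper plant `G` and sparsity subspace `S`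
given by `Kbin`, `S` is quadratically invariant under `G` iff the feedback transformation
`K ↦ K(I+GK)⁻¹` maps the set of proper elements of `S` onto itself. -/
theorem quadratic_invariance_iff_feedback_invariance (m p : ℕ)
    (G : Matrix (Fin m) (Fin p) F) (hG : StrictlyProper G)
    (Kbin : Fin p → Fin m → Bool) :
    (∀ K : Matrix (Fin p) (Fin m) F,
        (∀ i j, Kbin i j = false → K i j = 0) →
        (∀ i j, Kbin i j = false → (K * G * K) i j = 0)) ↔
    ((fun K : Matrix (Fin p) (Fin m) F => K * (1 + G * K)⁻¹) ''
        {K | (∀ i j, Kbin i j = false → K i j = 0) ∧ ProperM K} =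
      {K | (∀ i j, Kbin i j = false → K i j = 0) ∧ ProperM K}) := by
  constructor
  · intro hQI
    have hq : QIpat G Kbin := qipat_of_proper (fun K hK _ => hQI K hK)
    apply Set.eq_of_subset_of_subset
    · rintro T ⟨K, ⟨hKpat, hKprop⟩, rfl⟩
      exact ⟨pattern_feedback hG hq hKpat hKprop, proper_feedback hG hKprop⟩
    · rintro T ⟨hTpat, hTprop⟩
      have hGneg : StrictlyProper (-G) := fun i j => by
        rw [Matrix.neg_apply]
        exact sp_neg (hG i j)
      have hqneg : QIpat (-G) Kbin := by
        intro i j k l h1 h2 h3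
        rw [Matrix.neg_apply, hq i j k l h1 h2 h3, neg_zero]
      have hW : (1 : Matrix (Fin m) (Fin m) F) - G * T = 1 + (-G) * T := by
        rw [Matrix.neg_mul, sub_eq_add_neg]
      have hdet : IsUnit ((1 : Matrix (Fin m) (Fin m) F) - G * T).det := by
        rw [hW]
        exact isUnit_det_one_add (sp_matmul hGneg hTprop)
      refine ⟨T * (1 - G * T)⁻¹, ⟨?_, ?_⟩, feedback_surj_eq hdet⟩
      · have hpf := pattern_feedback hGneg hqneg hTpat hTprop
        rw [← hW] at hpf
        exact hpf
      · have hpf := proper_feedback hGneg hTprop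
        rw [← hW] at hpf
        exact hpf
  · intro himg
    have hcl : ∀ K : Matrix (Fin p) (Fin m) F, SPat Kbin K → ProperM K →
        SPat Kbin (K * (1 + G * K)⁻¹) := by
      intro K hK hKp
      have hmem : K * (1 + G * K)⁻¹ ∈
          {K : Matrix (Fin p) (Fin m) F |
            (∀ i j, Kbin i j = false → K i j = 0) ∧ ProperM K} := by
        rw [← himg]
        exact ⟨K, ⟨hK, hKp⟩, rfl⟩
      exact hmem.1
    have hq : QIpat G Kbin :=
      qipat_of_proper (fun K hK hKp => feedback_closed_implies_qi hG hcl hK hKp)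
    exact fun K hK => qipat_implies hq hK
end
end

section
/- (Theorem 3, main result.) Let (M, N, M̃, Ñ, X, Y, X̃, Ỹ) be a DCF of the strictly proper plant G ∈ F^{m×p} over Ω, and let the sparsity subspace S defined by K^bin be QI under G. (Sufficiency) If Q ∈ 𝔸^{p×m} is stable and satisfies wp(X̃_Q·M̃) ≤ K^bin or wp(M·X_Q) ≤ K^bin, then K_Q ∈ S and K_Q stabilizes G. (Necessity) If K ∈ S stabilizes G, then there exists a stable Q ∈ 𝔸^{p×m} with K = K_Q, wp(X̃_Q·M̃) ≤ K^bin, and wp(M·X_Q) ≤ K^bin. -/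
set_option synthInstance.maxHeartbeats 1000000
set_option maxHeartbeats 1000000


open Matrix

noncomputable section

namespace Aux

open Filter Polynomial

instance : CharZero F := charZero_of_injective_algebraMap (algebraMap ℝ F).injective

/-! ### Stable rational functions form a subring -/

lemma stable_of_denom_dvd {Ω : Set ℂ} {f g h : F}
    (hf : StableF Ω f) (hg : StableF Ω g) (hdeg : h.intDegree ≤ 0)
    (hdvd : h.denom ∣ f.denom * g.denom) : StableF Ω h := by
  refine ⟨hdeg, fun z hz => ?_⟩
  have hdvd' : h.denom.map (algebraMap ℝ ℂ) ∣
      (f.denom.map (algebraMap ℝ ℂ)) * (g.denom.map (algebraMap ℝ ℂ)) := by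
    rw [← Polynomial.map_mul]; exact Polynomial.map_dvd _ hdvd
  have hz' : ((f.denom.map (algebraMap ℝ ℂ)) * (g.denom.map (algebraMap ℝ ℂ))).IsRoot z :=
    Polynomial.eval_eq_zero_of_dvd_of_eval_eq_zero hdvd' hz
  rw [Polynomial.IsRoot, Polynomial.eval_mul, mul_eq_zero] at hz'
  rcases hz' with h1 | h1
  · exact hf.2 z h1
  · exact hg.2 z h1

lemma stable_zero {Ω : Set ℂ} : StableF Ω 0 := by
  refine ⟨by simp [RatFunc.intDegree_zero], fun z hz => ?_⟩
  simp [Polynomial.IsRoot, RatFunc.denom_zero] at hz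

lemma stable_one {Ω : Set ℂ} : StableF Ω 1 := by
  refine ⟨by simp [RatFunc.intDegree_one], fun z hz => ?_⟩
  simp [Polynomial.IsRoot, RatFunc.denom_one] at hz

lemma stable_add {Ω : Set ℂ} {f g : F} (hf : StableF Ω f) (hg : StableF Ω g) :
    StableF Ω (f + g) := by
  by_cases hg0 : g = 0
  · simpa [hg0] using hf
  by_cases hfg : f + g = 0
  · simpa [hfg] using (stable_zero (Ω := Ω))
  refine stable_of_denom_dvd hf hg ?_ (RatFunc.denom_add_dvd f g)
  calc (f + g).intDegree ≤ max f.intDegree g.intDegree := RatFunc.intDegree_add_le hg0 hfg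
    _ ≤ 0 := max_le hf.1 hg.1

lemma stable_mul {Ω : Set ℂ} {f g : F} (hf : StableF Ω f) (hg : StableF Ω g) :
    StableF Ω (f * g) := by
  by_cases hf0 : f = 0
  · simpa [hf0] using (stable_zero (Ω := Ω))
  by_cases hg0 : g = 0
  · simpa [hg0] using (stable_zero (Ω := Ω))
  refine stable_of_denom_dvd hf hg ?_ (RatFunc.denom_mul_dvd f g)
  rw [RatFunc.intDegree_mul hf0 hg0]
  exact add_nonpos hf.1 hg.1

lemma stable_neg {Ω : Set ℂ} {f : F} (hf : StableF Ω f) : StableF Ω (-f) := by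
  refine stable_of_denom_dvd hf (stable_one (Ω := Ω))
    (by rw [RatFunc.intDegree_neg]; exact hf.1) ?_
  have h1 : (-f) = RatFunc.C (-1) * f := by
    rw [map_neg, _root_.map_one, neg_one_mul]
  have := RatFunc.denom_mul_dvd (RatFunc.C (-1)) f
  rw [← h1, RatFunc.denom_C, one_mul] at this
  simpa [RatFunc.denom_one] using this

lemma stable_sub {Ω : Set ℂ} {f g : F} (hf : StableF Ω f) (hg : StableF Ω g) :
    StableF Ω (f - g) := by
  rw [sub_eq_add_neg]; exact stable_add hf (stable_neg hg)

lemma stable_sum {Ω : Set ℂ} {ι : Type*} (s : Finset ι) (f : ι → F)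
    (h : ∀ i ∈ s, StableF Ω (f i)) : StableF Ω (∑ i ∈ s, f i) := by
  classical
  induction s using Finset.induction_on with
  | empty => simpa using (stable_zero (Ω := Ω))
  | insert _ _ hni ih =>
    rw [Finset.sum_insert hni]
    exact stable_add (h _ (Finset.mem_insert_self _ _))
      (ih fun i hi => h i (Finset.mem_insert_of_mem hi))

/-! ### Stable matrices -/

lemma matStable_add {Ω : Set ℂ} {a b : Type} {A B : Matrix a b F}
    (hA : MatStable Ω A) (hB : MatStable Ω B) : MatStable Ω (A + B) := fun i j => by
  rw [Matrix.add_apply]; exact stable_add (hA i j) (hB i j)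

lemma matStable_neg {Ω : Set ℂ} {a b : Type} {A : Matrix a b F}
    (hA : MatStable Ω A) : MatStable Ω (-A) := fun i j => by
  rw [Matrix.neg_apply]; exact stable_neg (hA i j)

lemma matStable_sub {Ω : Set ℂ} {a b : Type} {A B : Matrix a b F}
    (hA : MatStable Ω A) (hB : MatStable Ω B) : MatStable Ω (A - B) := fun i j => by
  rw [Matrix.sub_apply]; exact stable_sub (hA i j) (hB i j)

lemma matStable_mul {Ω : Set ℂ} {n q r : ℕ} {A : Matrix (Fin n) (Fin q) F}
    {B : Matrix (Fin q) (Fin r) F} (hA : MatStable Ω A) (hB : MatStable Ω B) :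
    MatStable Ω (A * B) := fun i j => by
  rw [Matrix.mul_apply]
  exact stable_sum _ _ fun k _ => stable_mul (hA i k) (hB k j)

lemma matStable_one {Ω : Set ℂ} {n : ℕ} : MatStable Ω (1 : Matrix (Fin n) (Fin n) F) :=
  fun i j => by
  rcases eq_or_ne i j with h | h
  · subst h; simpa using (stable_one (Ω := Ω))
  · simpa [Matrix.one_apply, h] using (stable_zero (Ω := Ω))

/-! ### Limits at infinity -/

/-- Evaluation of a rational function as a real function. -/
def ev (f : F) (t : ℝ) : ℝ := f.eval (RingHom.id ℝ) t

def TendstoEv (f : F) (L : ℝ) : Prop := Tendsto (ev f) atTop (nhds L)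

lemma eventually_denom_ne (f : F) : ∀ᶠ t in atTop, Polynomial.eval t f.denom ≠ 0 := by
  have hfin := Polynomial.finite_setOf_isRoot (f.denom_ne_zero)
  obtain ⟨b, hb⟩ := hfin.bddAbove
  filter_upwards [eventually_gt_atTop b] with t ht h
  exact absurd (hb (by exact h : t ∈ {x | Polynomial.IsRoot f.denom x})) (not_le.mpr ht)

lemma ev_add_eventually (f g : F) : ∀ᶠ t in atTop, ev (f + g) t = ev f t + ev g t := by
  filter_upwards [eventually_denom_ne f, eventually_denom_ne g] with t hf hg
  exact RatFunc.eval_add (f := RingHom.id ℝ) (a := t) hf hg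

lemma ev_mul_eventually (f g : F) : ∀ᶠ t in atTop, ev (f * g) t = ev f t * ev g t := by
  filter_upwards [eventually_denom_ne f, eventually_denom_ne g] with t hf hg
  exact RatFunc.eval_mul (f := RingHom.id ℝ) (a := t) hf hg

lemma tendstoEv_add {f g : F} {L L' : ℝ} (hf : TendstoEv f L) (hg : TendstoEv g L') :
    TendstoEv (f + g) (L + L') := by
  refine (hf.add hg).congr' ?_
  filter_upwards [ev_add_eventually f g] with t h using h.symm

lemma tendstoEv_mul {f g : F} {L L' : ℝ} (hf : TendstoEv f L) (hg : TendstoEv g L') :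
    TendstoEv (f * g) (L * L') := by
  refine (hf.mul hg).congr' ?_
  filter_upwards [ev_mul_eventually f g] with t h using h.symm

lemma tendstoEv_zero : TendstoEv 0 0 := by
  have : ev (0 : F) = fun _ => 0 := by funext t; simp [ev]
  rw [TendstoEv, this]; exact tendsto_const_nhds

lemma tendstoEv_one : TendstoEv 1 1 := by
  have : ev (1 : F) = fun _ => 1 := by funext t; simp [ev]
  rw [TendstoEv, this]; exact tendsto_const_nhds

lemma tendstoEv_neg {f : F} {L : ℝ} (hf : TendstoEv f L) : TendstoEv (-f) (-L) := by
  have h1 : (-f) = RatFunc.C (-1) * f := by rw [map_neg, _root_.map_one, neg_one_mul]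
  have hC : TendstoEv (RatFunc.C (-1)) (-1) := by
    have : ev (RatFunc.C (-1) : F) = fun _ => (-1 : ℝ) := by
      funext t
      show RatFunc.eval (RingHom.id ℝ) t (RatFunc.C (-1)) = -1
      rw [RatFunc.eval_C]; simp
    rw [TendstoEv, this]; exact tendsto_const_nhds
  have := tendstoEv_mul hC hf
  rw [← h1, neg_one_mul] at this; exact this

lemma tendstoEv_unique {f : F} {L L' : ℝ} (h : TendstoEv f L) (h' : TendstoEv f L') : L = L' :=
  tendsto_nhds_unique h h'

lemma tendstoEv_sum {ι : Type*} (s : Finset ι) (f : ι → F) (L : ι → ℝ)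
    (h : ∀ i ∈ s, TendstoEv (f i) (L i)) :
    TendstoEv (∑ i ∈ s, f i) (∑ i ∈ s, L i) := by
  classical
  induction s using Finset.induction_on with
  | empty => simpa using tendstoEv_zero
  | insert _ _ hni ih =>
    rw [Finset.sum_insert hni, Finset.sum_insert hni]
    exact tendstoEv_add (h _ (Finset.mem_insert_self _ _))
      (ih fun i hi => h i (Finset.mem_insert_of_mem hi))

lemma tendstoEv_prod {ι : Type*} (s : Finset ι) (f : ι → F) (L : ι → ℝ)
    (h : ∀ i ∈ s, TendstoEv (f i) (L i)) :
    TendstoEv (∏ i ∈ s, f i) (∏ i ∈ s, L i) := by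
  classical
  induction s using Finset.induction_on with
  | empty => simpa using tendstoEv_one
  | insert _ _ hni ih =>
    rw [Finset.prod_insert hni, Finset.prod_insert hni]
    exact tendstoEv_mul (h _ (Finset.mem_insert_self _ _))
      (ih fun i hi => h i (Finset.mem_insert_of_mem hi))

/-- Every proper rational function has a limit at `+∞`. -/
lemma tendstoEv_of_proper {f : F} (h : f.intDegree ≤ 0) : ∃ L, TendstoEv f L := by
  by_cases hf0 : f = 0
  · exact ⟨0, by rw [hf0]; exact tendstoEv_zero⟩
  have hnum : f.num ≠ 0 := RatFunc.num_ne_zero hf0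
  have hev : ev f = fun t => Polynomial.eval t f.num / Polynomial.eval t f.denom := by
    funext t; rfl
  have hdeg : f.num.natDegree ≤ f.denom.natDegree := by
    have := h; rw [RatFunc.intDegree] at this; omega
  rcases lt_or_eq_of_le hdeg with hlt | heq
  · refine ⟨0, ?_⟩
    rw [TendstoEv, hev]
    exact Polynomial.div_tendsto_zero_of_degree_lt _ _
      (by rw [Polynomial.degree_eq_natDegree hnum, Polynomial.degree_eq_natDegree f.denom_ne_zero]
          exact_mod_cast hlt)
  · refine ⟨f.num.leadingCoeff / f.denom.leadingCoeff, ?_⟩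
    rw [TendstoEv, hev]
    exact Polynomial.div_tendsto_leadingCoeff_div_of_degree_eq _ _
      (by rw [Polynomial.degree_eq_natDegree hnum, Polynomial.degree_eq_natDegree f.denom_ne_zero]
          exact_mod_cast heq)

lemma tendstoEv_zero_of_strict {f : F} (h : f = 0 ∨ f.intDegree < 0) : TendstoEv f 0 := by
  rcases h with h | h
  · rw [h]; exact tendstoEv_zero
  by_cases hf0 : f = 0
  · rw [hf0]; exact tendstoEv_zero
  have hnum : f.num ≠ 0 := RatFunc.num_ne_zero hf0
  have hev : ev f = fun t => Polynomial.eval t f.num / Polynomial.eval t f.denom := by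
    funext t; rfl
  have hdeg : f.num.natDegree < f.denom.natDegree := by
    rw [RatFunc.intDegree] at h; omega
  rw [TendstoEv, hev]
  exact Polynomial.div_tendsto_zero_of_degree_lt _ _
    (by rw [Polynomial.degree_eq_natDegree hnum, Polynomial.degree_eq_natDegree f.denom_ne_zero]
        exact_mod_cast hdeg)

lemma tendstoEv_mul_strictR {f g : F} (hf : f.intDegree ≤ 0) (hg : g = 0 ∨ g.intDegree < 0) :
    TendstoEv (f * g) 0 := by
  obtain ⟨L, hL⟩ := tendstoEv_of_proper hf
  simpa using tendstoEv_mul hL (tendstoEv_zero_of_strict hg)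

lemma tendstoEv_strictL_mul {f g : F} (hf : f = 0 ∨ f.intDegree < 0) (hg : g.intDegree ≤ 0) :
    TendstoEv (f * g) 0 := by
  obtain ⟨L, hL⟩ := tendstoEv_of_proper hg
  simpa using tendstoEv_mul (tendstoEv_zero_of_strict hf) hL

lemma matTendsto_zero_mul {n q r : ℕ} {Cm : Matrix (Fin n) (Fin q) F}
    {Gm : Matrix (Fin q) (Fin r) F} (hC : ∀ i j, (Cm i j).intDegree ≤ 0)
    (hG : ∀ i j, Gm i j = 0 ∨ (Gm i j).intDegree < 0) :
    ∀ i j, TendstoEv ((Cm * Gm) i j) 0 := by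
  intro i j
  rw [Matrix.mul_apply]
  have := tendstoEv_sum Finset.univ (fun k => Cm i k * Gm k j) (fun _ => 0)
    (fun k _ => tendstoEv_mul_strictR (hC i k) (hG k j))
  simpa using this

lemma matTendsto_mul_zero {n q r : ℕ} {Gm : Matrix (Fin n) (Fin q) F}
    {Cm : Matrix (Fin q) (Fin r) F} (hG : ∀ i j, Gm i j = 0 ∨ (Gm i j).intDegree < 0)
    (hC : ∀ i j, (Cm i j).intDegree ≤ 0) :
    ∀ i j, TendstoEv ((Gm * Cm) i j) 0 := by
  intro i j
  rw [Matrix.mul_apply]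
  have := tendstoEv_sum Finset.univ (fun k => Gm i k * Cm k j) (fun _ => 0)
    (fun k _ => tendstoEv_strictL_mul (hG i k) (hC k j))
  simpa using this

def MatTendsto {a b : Type} (A : Matrix a b F) (Ah : Matrix a b ℝ) : Prop :=
  ∀ i j, TendstoEv (A i j) (Ah i j)

lemma matTendsto_mul {n q r : ℕ} {A : Matrix (Fin n) (Fin q) F} {B : Matrix (Fin q) (Fin r) F}
    {Ah Bh} (hA : MatTendsto A Ah) (hB : MatTendsto B Bh) :
    MatTendsto (A * B) (Ah * Bh) := by
  intro i j
  rw [Matrix.mul_apply, Matrix.mul_apply]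
  exact tendstoEv_sum _ _ _ fun k _ => tendstoEv_mul (hA i k) (hB k j)

lemma matTendsto_one {n : ℕ} : MatTendsto (1 : Matrix (Fin n) (Fin n) F) 1 := by
  intro i j
  by_cases h : i = j
  · subst h; simpa using tendstoEv_one
  · simpa [Matrix.one_apply, h] using tendstoEv_zero

lemma tendstoEv_det {n : ℕ} {A : Matrix (Fin n) (Fin n) F} {Ah : Matrix (Fin n) (Fin n) ℝ}
    (h : MatTendsto A Ah) : TendstoEv A.det Ah.det := by
  rw [Matrix.det_apply, Matrix.det_apply]
  refine tendstoEv_sum _ _ _ fun σ _ => ?_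
  rcases Int.units_eq_one_or (Equiv.Perm.sign σ) with hs | hs <;> rw [hs]
  · simpa using tendstoEv_prod _ _ _ fun i _ => h (σ i) i
  · simpa using tendstoEv_neg (tendstoEv_prod _ _ _ fun i _ => h (σ i) i)

/-- Key analytic lemma: if `A` is proper, `E → 0` entrywise, `Mi` proper, and `(A+E)*Mi = 1`,
then `det A` is a unit. -/
lemma det_ne_zero_of_proper_inv {n : ℕ} {A E Mi : Matrix (Fin n) (Fin n) F}
    (hA : ∀ i j, (A i j).intDegree ≤ 0) (hE : ∀ i j, TendstoEv (E i j) 0)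
    (hMi : ∀ i j, (Mi i j).intDegree ≤ 0) (h1 : (A + E) * Mi = 1) :
    IsUnit A.det := by
  have hAh : ∃ Ah : Matrix (Fin n) (Fin n) ℝ, MatTendsto A Ah := by
    choose Ah hAh using fun i j => tendstoEv_of_proper (hA i j)
    exact ⟨fun i j => Ah i j, hAh⟩
  obtain ⟨Ah, hAt⟩ := hAh
  have hMih : ∃ Mh : Matrix (Fin n) (Fin n) ℝ, MatTendsto Mi Mh := by
    choose Mh hMh using fun i j => tendstoEv_of_proper (hMi i j)
    exact ⟨fun i j => Mh i j, hMh⟩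
  obtain ⟨Mh, hMt⟩ := hMih
  have hAE : MatTendsto (A + E) Ah := by
    intro i j
    have := tendstoEv_add (hAt i j) (hE i j)
    simpa using this
  have hprod : MatTendsto ((A + E) * Mi) (Ah * Mh) := matTendsto_mul hAE hMt
  have hone : MatTendsto ((A + E) * Mi) (1 : Matrix (Fin n) (Fin n) ℝ) := by
    rw [h1]; exact matTendsto_one
  have heq : Ah * Mh = 1 := by
    funext i j
    exact tendstoEv_unique (hprod i j) (hone i j)
  have hdet : Ah.det ≠ 0 := by
    intro h0
    have := congrArg Matrix.det heq
    rw [Matrix.det_mul, h0, zero_mul, Matrix.det_one] at this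
    exact one_ne_zero (α := ℝ) this.symm
  have hAdet : TendstoEv A.det Ah.det := tendstoEv_det hAt
  rw [isUnit_iff_ne_zero]
  intro h0
  rw [h0] at hAdet
  exact hdet (tendstoEv_unique hAdet tendstoEv_zero).symm.symm

/-! ### Quadratic invariance machinery -/

/-- The inverse of an invertible matrix is a polynomial in the matrix. -/
lemma inv_eq_aeval {n : ℕ} (B : Matrix (Fin n) (Fin n) F) (h : IsUnit B.det) :
    ∃ q : Polynomial F, B⁻¹ = Polynomial.aeval B q := by
  have hc := Matrix.aeval_self_charpoly B
  set c : F := B.charpoly.coeff 0 with hc0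
  have hcne : c ≠ 0 := by
    intro h0
    have hdet := Matrix.det_eq_sign_charpoly_coeff B
    rw [← hc0, h0, mul_zero] at hdet
    rw [hdet] at h
    simpa using h
  have hsplit : X * B.charpoly.divX + C c = B.charpoly := Polynomial.X_mul_divX_add _
  have h2 : B * Polynomial.aeval B B.charpoly.divX + c • 1 = 0 := by
    have := congrArg (Polynomial.aeval B) hsplit
    rw [map_add, _root_.map_mul, Polynomial.aeval_X, Polynomial.aeval_C, hc] at this
    rw [← this]
    congr 1
    rw [Algebra.algebraMap_eq_smul_one]
  refine ⟨Polynomial.C (-c)⁻¹ * B.charpoly.divX, ?_⟩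
  apply Matrix.inv_eq_right_inv
  rw [_root_.map_mul, Polynomial.aeval_C]
  have h3 : B * Polynomial.aeval B B.charpoly.divX = (-c) • 1 := by
    have := h2
    rw [add_eq_zero_iff_eq_neg] at this
    rw [this, neg_smul]
  rw [Algebra.algebraMap_eq_smul_one]
  calc B * ((-c)⁻¹ • (1 : Matrix (Fin n) (Fin n) F) * Polynomial.aeval B B.charpoly.divX)
      = (-c)⁻¹ • (B * Polynomial.aeval B B.charpoly.divX) := by
        rw [Matrix.smul_mul, one_mul, Matrix.mul_smul]
    _ = 1 := by rw [h3, smul_smul, inv_mul_cancel₀ (neg_ne_zero.mpr hcne), one_smul]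

variable {m p : ℕ}

/-- Sparsity predicate. -/
def SP (Kbin : Fin p → Fin m → Bool) (T : Matrix (Fin p) (Fin m) F) : Prop :=
  ∀ i j, Kbin i j = false → T i j = 0

lemma SP_add (Kbin : Fin p → Fin m → Bool) {T T' : Matrix (Fin p) (Fin m) F}
    (h : SP Kbin T) (h' : SP Kbin T') : SP Kbin (T + T') := fun i j hij => by
  rw [Matrix.add_apply, h i j hij, h' i j hij, add_zero]

lemma SP_neg (Kbin : Fin p → Fin m → Bool) {T : Matrix (Fin p) (Fin m) F}
    (h : SP Kbin T) : SP Kbin (-T) := fun i j hij => by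
  rw [Matrix.neg_apply, h i j hij, neg_zero]

lemma SP_smul (Kbin : Fin p → Fin m → Bool) (c : F) {T : Matrix (Fin p) (Fin m) F}
    (h : SP Kbin T) : SP Kbin (c • T) :=
  fun i j hij => by rw [Matrix.smul_apply, h i j hij, smul_zero]

lemma SP_sum (Kbin : Fin p → Fin m → Bool) {ι : Type} (s : Finset ι)
    (T : ι → Matrix (Fin p) (Fin m) F)
    (h : ∀ i ∈ s, SP Kbin (T i)) : SP Kbin (∑ i ∈ s, T i) := fun i j hij => by
  classical
  rw [Matrix.sum_apply]
  exact Finset.sum_eq_zero fun k hk => h k hk i j hij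

/-- Under quadratic invariance, `T * (G*T)^n` stays in the sparsity subspace. -/
lemma SP_pow (G : Matrix (Fin m) (Fin p) F) (Kbin : Fin p → Fin m → Bool)
    (hQI : ∀ T, SP Kbin T → SP Kbin (T * G * T))
    {T : Matrix (Fin p) (Fin m) F} (hT : SP Kbin T) :
    ∀ nn : ℕ, SP Kbin (T * (G * T) ^ nn) := by
  intro nn
  induction nn with
  | zero => simpa using hT
  | succ k ih =>
    set J := T * (G * T) ^ k with hJ
    have e1 : T * (G * T) ^ (k + 1) = J * G * T := by
      rw [hJ, pow_succ]; simp only [← Matrix.mul_assoc]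
    have e2 : T * (G * T) ^ (k + 1) = T * G * J := by
      rw [hJ, pow_succ']; simp only [← Matrix.mul_assoc]
    have hsum : SP Kbin (T * G * J + J * G * T) := by
      have hTJ : SP Kbin (T + J) := SP_add Kbin hT ih
      have h1 := hQI _ hTJ
      have h2 := hQI _ hT
      have h3 := hQI _ ih
      have hexp : T * G * J + J * G * T =
          (T + J) * G * (T + J) + (-(T * G * T)) + (-(J * G * J)) := by
        simp only [Matrix.add_mul, Matrix.mul_add]
        abel
      rw [hexp]
      exact SP_add Kbin (SP_add Kbin h1 (SP_neg Kbin h2)) (SP_neg Kbin h3)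
    intro i j hij
    have := hsum i j hij
    rw [Matrix.add_apply, ← e2, ← e1] at this
    exact add_self_eq_zero.mp this

/-- Under QI, `T * (1 + G*T)⁻¹` stays in the sparsity subspace. -/
lemma SP_closed_loop (G : Matrix (Fin m) (Fin p) F) (Kbin : Fin p → Fin m → Bool)
    (hQI : ∀ T, SP Kbin T → SP Kbin (T * G * T))
    {T : Matrix (Fin p) (Fin m) F} (hT : SP Kbin T)
    (hu : IsUnit (1 + G * T).det) :
    SP Kbin (T * (1 + G * T)⁻¹) := by
  obtain ⟨q, hq⟩ := inv_eq_aeval (1 + G * T) hu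
  have hq' : (1 + G * T)⁻¹ = Polynomial.aeval (G * T) (q.comp (X + 1)) := by
    rw [Polynomial.aeval_comp, map_add, Polynomial.aeval_X, Polynomial.aeval_one, hq]
    congr 1
    rw [add_comm]
  rw [hq', Polynomial.aeval_eq_sum_range, Matrix.mul_sum]
  refine SP_sum Kbin _ _ fun k _ => ?_
  rw [Matrix.mul_smul]
  exact SP_smul Kbin _ (SP_pow G Kbin hQI hT k)

/-! ### Block matrix bookkeeping -/

lemma blocks_eq {p m : ℕ} {A A' : Matrix (Fin p) (Fin p) F} {B B' : Matrix (Fin p) (Fin m) F}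
    {C C' : Matrix (Fin m) (Fin p) F} {D D' : Matrix (Fin m) (Fin m) F}
    (h : fromBlocks A B C D = fromBlocks A' B' C' D') :
    A = A' ∧ B = B' ∧ C = C' ∧ D = D' :=
  ⟨by simpa using congrArg Matrix.toBlocks₁₁ h,
   by simpa using congrArg Matrix.toBlocks₁₂ h,
   by simpa using congrArg Matrix.toBlocks₂₁ h,
   by simpa using congrArg Matrix.toBlocks₂₂ h⟩

lemma bezout_components {p m : ℕ} {A : Matrix (Fin p) (Fin p) F} {B : Matrix (Fin p) (Fin m) F}
    {C : Matrix (Fin m) (Fin p) F} {D : Matrix (Fin m) (Fin m) F}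
    {A' : Matrix (Fin p) (Fin p) F} {B' : Matrix (Fin p) (Fin m) F}
    {C' : Matrix (Fin m) (Fin p) F} {D' : Matrix (Fin m) (Fin m) F}
    (h : fromBlocks A B C D * fromBlocks A' B' C' D' = 1) :
    A * A' + B * C' = 1 ∧ A * B' + B * D' = 0 ∧ C * A' + D * C' = 0 ∧ C * B' + D * D' = 1 := by
  rw [fromBlocks_multiply, ← fromBlocks_one (l := Fin p) (m := Fin m)] at h
  exact blocks_eq h

/-- Modified Bezout identity for the Youla parameter `Q`. -/
lemma modified_bezout {p m : ℕ} {M Y : Matrix (Fin p) (Fin p) F}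
    {X Xt : Matrix (Fin p) (Fin m) F} {N Nt : Matrix (Fin m) (Fin p) F}
    {Mt Yt : Matrix (Fin m) (Fin m) F}
    (hbez : fromBlocks Y X (-Nt) Mt * fromBlocks M (-Xt) N Yt = 1)
    (Q : Matrix (Fin p) (Fin m) F) :
    fromBlocks (Y - Q * Nt) (X + Q * Mt) (-Nt) Mt *
      fromBlocks M (-(Xt + M * Q)) N (Yt - N * Q) = 1 := by
  have hU : fromBlocks (Y - Q * Nt) (X + Q * Mt) (-Nt) Mt =
      fromBlocks 1 Q 0 1 * fromBlocks Y X (-Nt) Mt := by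
    rw [fromBlocks_multiply, Matrix.fromBlocks_inj]
    refine ⟨by simp [sub_eq_add_neg], by simp, by simp, by simp⟩
  have hR : fromBlocks M (-(Xt + M * Q)) N (Yt - N * Q) =
      fromBlocks M (-Xt) N Yt * fromBlocks 1 (-Q) 0 1 := by
    rw [fromBlocks_multiply, Matrix.fromBlocks_inj]
    refine ⟨by simp, by simp [neg_add, add_comm], by simp, by simp [sub_eq_add_neg, add_comm]⟩
  rw [hU, hR, Matrix.mul_assoc, ← Matrix.mul_assoc (fromBlocks Y X (-Nt) Mt), hbez, one_mul,
    fromBlocks_multiply, ← fromBlocks_one (l := Fin p) (m := Fin m), Matrix.fromBlocks_inj]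
  refine ⟨by simp, by simp, by simp, by simp⟩

end Aux

/-- **Theorem 3 (main result).** Let a DCF of the strictly proper plant `G` be given and let the
sparsity subspace `S` given by `Kbin` be QI under `G`. If `Q` is stable and
`wp(X̃_Q·M̃) ≤ K^bin` or `wp(M·X_Q) ≤ K^bin`, then `K_Q ∈ S` and `K_Q` stabilizes `G`;
conversely, every stabilizing controller in `S` equals `K_Q` for some stable `Q` satisfying
both sparsity inequalities. -/
theorem main_sparse_stabilization (Ω : Set ℂ) (m p : ℕ)
    (G : Matrix (Fin m) (Fin p) F) (hG : StrictlyProper G)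
    (M : Matrix (Fin p) (Fin p) F) (N : Matrix (Fin m) (Fin p) F)
    (Mt : Matrix (Fin m) (Fin m) F) (Nt : Matrix (Fin m) (Fin p) F)
    (X : Matrix (Fin p) (Fin m) F) (Y : Matrix (Fin p) (Fin p) F)
    (Xt : Matrix (Fin p) (Fin m) F) (Yt : Matrix (Fin m) (Fin m) F)
    (hDCF : IsDCF Ω G M N Mt Nt X Y Xt Yt)
    (Kbin : Fin p → Fin m → Bool)
    (hQI : ∀ K : Matrix (Fin p) (Fin m) F,
      (∀ i j, Kbin i j = false → K i j = 0) →
      (∀ i j, Kbin i j = false → (K * G * K) i j = 0)) :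
    (∀ Q : Matrix (Fin p) (Fin m) F, MatStable Ω Q →
      ((∀ i j, Kbin i j = false → ((Xt + M * Q) * Mt) i j = 0) ∨
       (∀ i j, Kbin i j = false → (M * (X + Q * Mt)) i j = 0)) →
      (∀ i j, Kbin i j = false → ((Y - Q * Nt)⁻¹ * (X + Q * Mt)) i j = 0) ∧
      Stabilizes Ω G ((Y - Q * Nt)⁻¹ * (X + Q * Mt))) ∧
    (∀ K : Matrix (Fin p) (Fin m) F,
      (∀ i j, Kbin i j = false → K i j = 0) → Stabilizes Ω G K →
      ∃ Q : Matrix (Fin p) (Fin m) F, MatStable Ω Q ∧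
        K = (Y - Q * Nt)⁻¹ * (X + Q * Mt) ∧
        (∀ i j, Kbin i j = false → ((Xt + M * Q) * Mt) i j = 0) ∧
        (∀ i j, Kbin i j = false → (M * (X + Q * Mt)) i j = 0)) := by
  classical
  obtain ⟨stM, stN, stMt, stNt, stX, stY, stXt, stYt, hM, hMt, hLeft, hRight, bez⟩ := hDCF
  have hN : N = G * M := by
    rw [hRight, Matrix.mul_assoc, Matrix.nonsing_inv_mul M hM, Matrix.mul_one]
  have hNt : Nt = Mt * G := by
    rw [hLeft, ← Matrix.mul_assoc, Matrix.mul_nonsing_inv Mt hMt, Matrix.one_mul]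
  have comps := fun Q : Matrix (Fin p) (Fin m) F =>
    Aux.bezout_components (Aux.modified_bezout bez Q)
  have rcomps := fun Q : Matrix (Fin p) (Fin m) F =>
    Aux.bezout_components (mul_eq_one_comm.mp (Aux.modified_bezout bez Q))
  have hQI' : ∀ T : Matrix (Fin p) (Fin m) F, Aux.SP Kbin T → Aux.SP Kbin (T * G * T) :=
    fun T hT => hQI T hT
  -- invertibility of `Y_Q` for stable `Q`
  have hYQu : ∀ Q : Matrix (Fin p) (Fin m) F, MatStable Ω Q → IsUnit (Y - Q * Nt).det := by
    intro Q hQ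
    have c1 := (comps Q).1
    have hfac : ((Y - Q * Nt) + (X + Q * Mt) * G) * M = 1 := by
      rw [Matrix.add_mul, Matrix.mul_assoc, ← hN]
      exact c1
    have hst : MatStable Ω (Y - Q * Nt) := Aux.matStable_sub stY (Aux.matStable_mul hQ stNt)
    have hstXQ : MatStable Ω (X + Q * Mt) := Aux.matStable_add stX (Aux.matStable_mul hQ stMt)
    exact Aux.det_ne_zero_of_proper_inv (fun i j => (hst i j).1)
      (Aux.matTendsto_zero_mul (fun i j => (hstXQ i j).1) hG) (fun i j => (stM i j).1) hfac
  constructor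
  · -- Sufficiency
    intro Q hQst hsp
    have huYQ := hYQu Q hQst
    have stYQ : MatStable Ω (Y - Q * Nt) := Aux.matStable_sub stY (Aux.matStable_mul hQst stNt)
    have stXQ : MatStable Ω (X + Q * Mt) := Aux.matStable_add stX (Aux.matStable_mul hQst stMt)
    have stXtQ : MatStable Ω (Xt + M * Q) := Aux.matStable_add stXt (Aux.matStable_mul stM hQst)
    have stYtQ : MatStable Ω (Yt - N * Q) := Aux.matStable_sub stYt (Aux.matStable_mul stN hQst)
    have hYQK : (Y - Q * Nt) * ((Y - Q * Nt)⁻¹ * (X + Q * Mt)) = X + Q * Mt := by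
      rw [← Matrix.mul_assoc, Matrix.mul_nonsing_inv _ huYQ, Matrix.one_mul]
    have hg2 : (X + Q * Mt) * (Yt - N * Q) = (Y - Q * Nt) * (Xt + M * Q) := by
      have h2 := (comps Q).2.1
      rw [Matrix.mul_neg, neg_add_eq_sub, sub_eq_zero] at h2
      exact h2
    have hKYtQ : ((Y - Q * Nt)⁻¹ * (X + Q * Mt)) * (Yt - N * Q) = Xt + M * Q := by
      rw [Matrix.mul_assoc, hg2, ← Matrix.mul_assoc, Matrix.nonsing_inv_mul _ huYQ,
        Matrix.one_mul]
    have hfacM : ((Y - Q * Nt) + (X + Q * Mt) * G) * M = 1 := by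
      rw [Matrix.add_mul, Matrix.mul_assoc, ← hN]
      exact (comps Q).1
    have hfacMt : Mt * ((Yt - N * Q) + G * (Xt + M * Q)) = 1 := by
      have c4 := (comps Q).2.2.2
      rw [Matrix.neg_mul, Matrix.mul_neg, neg_neg] at c4
      rw [Matrix.mul_add, ← Matrix.mul_assoc, ← hNt, add_comm]
      exact c4
    have h1GK : (1 + G * ((Y - Q * Nt)⁻¹ * (X + Q * Mt))) * ((Yt - N * Q) * Mt) = 1 := by
      have e : (1 + G * ((Y - Q * Nt)⁻¹ * (X + Q * Mt))) * (Yt - N * Q) =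
          (Yt - N * Q) + G * (Xt + M * Q) := by
        rw [Matrix.add_mul, Matrix.one_mul, Matrix.mul_assoc, hKYtQ]
      rw [← Matrix.mul_assoc, e]
      exact mul_eq_one_comm.mp hfacMt
    have hu3 : IsUnit (1 + G * ((Y - Q * Nt)⁻¹ * (X + Q * Mt))).det :=
      Matrix.isUnit_det_of_right_inverse h1GK
    have hinv3 : (1 + G * ((Y - Q * Nt)⁻¹ * (X + Q * Mt)))⁻¹ = (Yt - N * Q) * Mt :=
      Matrix.inv_eq_right_inv h1GK
    have h1KG : (1 + ((Y - Q * Nt)⁻¹ * (X + Q * Mt)) * G) * (M * (Y - Q * Nt)) = 1 := by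
      have e : (Y - Q * Nt) * (1 + ((Y - Q * Nt)⁻¹ * (X + Q * Mt)) * G) =
          (Y - Q * Nt) + (X + Q * Mt) * G := by
        rw [Matrix.mul_add, Matrix.mul_one, ← Matrix.mul_assoc, hYQK]
      have e2 : (Y - Q * Nt) * ((1 + ((Y - Q * Nt)⁻¹ * (X + Q * Mt)) * G) * M) = 1 := by
        rw [← Matrix.mul_assoc, e]; exact hfacM
      have e3 := mul_eq_one_comm.mp e2
      rw [← Matrix.mul_assoc]
      exact e3
    have hinv4 : (1 + ((Y - Q * Nt)⁻¹ * (X + Q * Mt)) * G)⁻¹ = M * (Y - Q * Nt) :=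
      Matrix.inv_eq_right_inv h1KG
    have hS3 : ((Y - Q * Nt)⁻¹ * (X + Q * Mt)) *
        (1 + G * ((Y - Q * Nt)⁻¹ * (X + Q * Mt)))⁻¹ = (Xt + M * Q) * Mt := by
      rw [hinv3, ← Matrix.mul_assoc, hKYtQ]
    have hS2 : (1 + G * ((Y - Q * Nt)⁻¹ * (X + Q * Mt)))⁻¹ * G = (Yt - N * Q) * Nt := by
      rw [hinv3, Matrix.mul_assoc, ← hNt]
    have hT : M * (X + Q * Mt) = (Xt + M * Q) * Mt := by
      have h2 := (rcomps Q).2.1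
      rw [Matrix.neg_mul, ← sub_eq_add_neg, sub_eq_zero] at h2
      exact h2
    have hstab : Stabilizes Ω G ((Y - Q * Nt)⁻¹ * (X + Q * Mt)) := by
      refine ⟨hu3, ?_, ?_, ?_, ?_⟩
      · rw [hinv3]; exact Aux.matStable_mul stYtQ stMt
      · rw [hS2]; exact Aux.matStable_mul stYtQ stNt
      · rw [hS3]; exact Aux.matStable_mul stXtQ stMt
      · rw [hinv4]; exact Aux.matStable_mul stM stYQ
    have hspT : Aux.SP Kbin ((Xt + M * Q) * Mt) := by
      rcases hsp with h | h
      · exact h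
      · intro i j hij; rw [← hT]; exact h i j hij
    have hTK : ((Xt + M * Q) * Mt) * (1 + G * ((Y - Q * Nt)⁻¹ * (X + Q * Mt))) =
        (Y - Q * Nt)⁻¹ * (X + Q * Mt) := by
      rw [← hS3, Matrix.mul_assoc, Matrix.nonsing_inv_mul _ hu3, Matrix.mul_one]
    have h6 : (1 + G * -((Xt + M * Q) * Mt)) *
        (1 + G * ((Y - Q * Nt)⁻¹ * (X + Q * Mt))) = 1 := by
      have e : (G * -((Xt + M * Q) * Mt)) * (1 + G * ((Y - Q * Nt)⁻¹ * (X + Q * Mt))) =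
          -(G * ((Y - Q * Nt)⁻¹ * (X + Q * Mt))) := by
        rw [Matrix.mul_neg, Matrix.neg_mul, Matrix.mul_assoc, hTK]
      rw [Matrix.add_mul, Matrix.one_mul, e]
      abel
    have hu6 : IsUnit (1 + G * -((Xt + M * Q) * Mt)).det :=
      Matrix.isUnit_det_of_right_inverse h6
    have hinv6 : (1 + G * -((Xt + M * Q) * Mt))⁻¹ =
        1 + G * ((Y - Q * Nt)⁻¹ * (X + Q * Mt)) := Matrix.inv_eq_right_inv h6
    have hspK : Aux.SP Kbin ((Y - Q * Nt)⁻¹ * (X + Q * Mt)) := by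
      have hnegT : Aux.SP Kbin (-((Xt + M * Q) * Mt)) := Aux.SP_neg Kbin hspT
      have hcl := Aux.SP_closed_loop G Kbin hQI' hnegT hu6
      rw [hinv6, Matrix.neg_mul, hTK] at hcl
      intro i j hij
      have h0 := hcl i j hij
      rw [Matrix.neg_apply, neg_eq_zero] at h0
      exact h0
    exact ⟨hspK, hstab⟩
  · -- Necessity
    intro K hspK hstab
    obtain ⟨hu3, S1, S2, S3, S4⟩ := hstab
    have hu4 : IsUnit (1 + K * G).det := by
      rw [Matrix.det_one_add_mul_comm]
      exact hu3
    have c40 : Nt * Xt + Mt * Yt = 1 := by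
      have c4 := (comps 0).2.2.2
      rw [Matrix.neg_mul, Matrix.mul_neg, neg_neg, Matrix.mul_zero, Matrix.mul_zero,
        add_zero, sub_zero] at c4
      exact c4
    have hD : Mt * (G * Xt + Yt) = 1 := by
      rw [Matrix.mul_add, ← Matrix.mul_assoc, ← hNt]
      exact c40
    have hCl : (Mt * (1 + G * K)) * ((1 + G * K)⁻¹ * (G * Xt + Yt)) = 1 := by
      rw [Matrix.mul_assoc Mt, ← Matrix.mul_assoc (1 + G * K),
        Matrix.mul_nonsing_inv _ hu3, Matrix.one_mul, hD]
    have hCr : ((1 + G * K)⁻¹ * (G * Xt + Yt)) * (Mt * (1 + G * K)) = 1 :=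
      mul_eq_one_comm.mp hCl
    have hMtI3 : Mt * (1 + G * K) = Mt + Nt * K := by
      rw [Matrix.mul_add, Matrix.mul_one, ← Matrix.mul_assoc, ← hNt]
    have hQMt : ((Y * K - X) * ((1 + G * K)⁻¹ * (G * Xt + Yt))) * (Mt + Nt * K) =
        Y * K - X := by
      rw [← hMtI3, Matrix.mul_assoc, hCr, Matrix.mul_one]
    have hYQK : (Y - ((Y * K - X) * ((1 + G * K)⁻¹ * (G * Xt + Yt))) * Nt) * K =
        X + ((Y * K - X) * ((1 + G * K)⁻¹ * (G * Xt + Yt))) * Mt := by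
      rw [Matrix.mul_add] at hQMt
      have h1 : ((Y * K - X) * ((1 + G * K)⁻¹ * (G * Xt + Yt))) * (Nt * K) =
          Y * K - X - ((Y * K - X) * ((1 + G * K)⁻¹ * (G * Xt + Yt))) * Mt := by
        rw [eq_sub_iff_add_eq, add_comm]
        exact hQMt
      rw [Matrix.sub_mul, Matrix.mul_assoc, h1]
      abel
    -- stability of Q
    have hKI3 : K * (1 + G * K)⁻¹ = (1 + K * G)⁻¹ * K := by
      have e : K * (1 + G * K) = (1 + K * G) * K := by
        rw [Matrix.mul_add, Matrix.add_mul, Matrix.mul_one, Matrix.one_mul,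
          Matrix.mul_assoc]
      calc K * (1 + G * K)⁻¹
          = ((1 + K * G)⁻¹ * ((1 + K * G) * K)) * (1 + G * K)⁻¹ := by
            rw [← Matrix.mul_assoc, Matrix.nonsing_inv_mul _ hu4, Matrix.one_mul]
        _ = ((1 + K * G)⁻¹ * (K * (1 + G * K))) * (1 + G * K)⁻¹ := by rw [e]
        _ = (1 + K * G)⁻¹ * K := by
            rw [Matrix.mul_assoc, Matrix.mul_assoc K, Matrix.mul_nonsing_inv _ hu3,
              Matrix.mul_one]
    have hKG1 : K * ((1 + G * K)⁻¹ * G) = 1 - (1 + K * G)⁻¹ := by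
      rw [← Matrix.mul_assoc, hKI3, Matrix.mul_assoc]
      have e2 : (1 + K * G)⁻¹ * (1 + K * G) = 1 := Matrix.nonsing_inv_mul _ hu4
      rw [Matrix.mul_add, Matrix.mul_one] at e2
      rw [eq_sub_iff_add_eq, add_comm]
      exact e2
    have stC : MatStable Ω ((1 + G * K)⁻¹ * (G * Xt + Yt)) := by
      rw [Matrix.mul_add, ← Matrix.mul_assoc]
      exact Aux.matStable_add (Aux.matStable_mul S2 stXt) (Aux.matStable_mul S1 stYt)
    have stKC : MatStable Ω (K * ((1 + G * K)⁻¹ * (G * Xt + Yt))) := by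
      have e1 : (K * (1 + G * K)⁻¹) * (G * Xt) = (1 - (1 + K * G)⁻¹) * Xt := by
        rw [← Matrix.mul_assoc, Matrix.mul_assoc K, hKG1]
      have e : K * ((1 + G * K)⁻¹ * (G * Xt + Yt)) =
          (1 - (1 + K * G)⁻¹) * Xt + (K * (1 + G * K)⁻¹) * Yt := by
        rw [← Matrix.mul_assoc, Matrix.mul_add, e1]
      rw [e]
      exact Aux.matStable_add
        (Aux.matStable_mul (Aux.matStable_sub Aux.matStable_one S4) stXt)
        (Aux.matStable_mul S3 stYt)
    have hQst : MatStable Ω ((Y * K - X) * ((1 + G * K)⁻¹ * (G * Xt + Yt))) := by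
      have e : (Y * K - X) * ((1 + G * K)⁻¹ * (G * Xt + Yt)) =
          Y * (K * ((1 + G * K)⁻¹ * (G * Xt + Yt))) -
            X * ((1 + G * K)⁻¹ * (G * Xt + Yt)) := by
        rw [Matrix.sub_mul, Matrix.mul_assoc]
      rw [e]
      exact Aux.matStable_sub (Aux.matStable_mul stY stKC) (Aux.matStable_mul stX stC)
    have huYQ := hYQu _ hQst
    have hKeq : K = (Y - ((Y * K - X) * ((1 + G * K)⁻¹ * (G * Xt + Yt))) * Nt)⁻¹ *
        (X + ((Y * K - X) * ((1 + G * K)⁻¹ * (G * Xt + Yt))) * Mt) := by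
      rw [← hYQK, ← Matrix.mul_assoc, Matrix.nonsing_inv_mul _ huYQ, Matrix.one_mul]
    -- M * X_Q = K * (1 + G*K)⁻¹
    have j1 : M * Y + Xt * Nt = 1 := by
      have h2 := (rcomps 0).1
      rw [Matrix.zero_mul, Matrix.mul_zero, sub_zero, add_zero, Matrix.neg_mul,
        Matrix.mul_neg, neg_neg] at h2
      exact h2
    have j2 : M * X = Xt * Mt := by
      have h2 := (rcomps 0).2.1
      rw [Matrix.zero_mul, Matrix.mul_zero, add_zero, add_zero, Matrix.neg_mul,
        ← sub_eq_add_neg, sub_eq_zero] at h2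
      exact h2
    have hMY : M * Y = 1 - Xt * Nt := by
      rw [eq_sub_iff_add_eq]; exact j1
    have hMC : (Mt + Nt * K) * ((1 + G * K)⁻¹ * (G * Xt + Yt)) = 1 := by
      rw [← hMtI3]; exact hCl
    have hMQ : M * ((Y * K - X) * ((1 + G * K)⁻¹ * (G * Xt + Yt))) =
        K * ((1 + G * K)⁻¹ * (G * Xt + Yt)) - Xt := by
      have e0 : M * ((Y * K - X) * ((1 + G * K)⁻¹ * (G * Xt + Yt))) =
          (M * (Y * K) - M * X) * ((1 + G * K)⁻¹ * (G * Xt + Yt)) := by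
        rw [← Matrix.mul_assoc, Matrix.mul_sub]
      have e1 : M * (Y * K) = K - Xt * (Nt * K) := by
        rw [← Matrix.mul_assoc, hMY, Matrix.sub_mul, Matrix.one_mul, Matrix.mul_assoc]
      have e2 : (K - Xt * (Nt * K) - Xt * Mt) * ((1 + G * K)⁻¹ * (G * Xt + Yt)) =
          K * ((1 + G * K)⁻¹ * (G * Xt + Yt)) - Xt := by
        rw [Matrix.sub_mul, Matrix.sub_mul]
        have e3 : (Xt * (Nt * K)) * ((1 + G * K)⁻¹ * (G * Xt + Yt)) +
            (Xt * Mt) * ((1 + G * K)⁻¹ * (G * Xt + Yt)) = Xt := by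
          rw [← Matrix.add_mul, ← Matrix.mul_add, Matrix.mul_assoc,
            add_comm (Nt * K) Mt, hMC, Matrix.mul_one]
        rw [sub_sub, e3]
      rw [e0, e1, j2, e2]
    have hCMt : ((1 + G * K)⁻¹ * (G * Xt + Yt)) * Mt = (1 + G * K)⁻¹ := by
      rw [Matrix.mul_assoc, mul_eq_one_comm.mp hD, Matrix.mul_one]
    have hMXQ : M * (X + ((Y * K - X) * ((1 + G * K)⁻¹ * (G * Xt + Yt))) * Mt) =
        K * (1 + G * K)⁻¹ := by
      rw [Matrix.mul_add, j2, ← Matrix.mul_assoc, hMQ, Matrix.sub_mul,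
        Matrix.mul_assoc, hCMt]
      abel
    have hspT : Aux.SP Kbin (K * (1 + G * K)⁻¹) :=
      Aux.SP_closed_loop G Kbin hQI' hspK hu3
    refine ⟨(Y * K - X) * ((1 + G * K)⁻¹ * (G * Xt + Yt)), hQst, hKeq, ?_, ?_⟩
    · have hT2 : M * (X + ((Y * K - X) * ((1 + G * K)⁻¹ * (G * Xt + Yt))) * Mt) =
          (Xt + M * ((Y * K - X) * ((1 + G * K)⁻¹ * (G * Xt + Yt)))) * Mt := by
        have h2 := (rcomps ((Y * K - X) * ((1 + G * K)⁻¹ * (G * Xt + Yt)))).2.1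
        rw [Matrix.neg_mul, ← sub_eq_add_neg, sub_eq_zero] at h2
        exact h2
      intro i j hij
      rw [← hT2, hMXQ]
      exact hspT i j hij
    · intro i j hij
      rw [hMXQ]
      exact hspT i j hij
end
end
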